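/- arXiv:2512.19462 — 7 statements merged into one kernel-verified Lean document; each statement's English description precedes it below -/
import Mathlib

section
/- For n ≥ 2 and 1 ≤ r ≤ n−1, the number of 132-avoiding permutations of length n with exactly r short values whose last entry is greater than 1 equals |A(n, r−1)|, the number of 132-avoiding permutations of length n with exactly r−1 short values. -/
open List

attribute [local instance] Classical.propDecidable

/-- `l` is a permutation of length `n`, i.e. a list containing each of `1,…,n` exactly once. -/
def IsPermList (n : ℕ) (l : List ℕ) : Prop :=
  l.Perm (List.range' 1 n)

/-- Two sequences (with distinct entries) are order-isomorphic: same length and the same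
pairwise order relations. -/
def OrderIsoList (a b : List ℕ) : Prop :=
  a.length = b.length ∧
    ∀ i j, i < j → j < a.length →
      (a.getD i 0 < a.getD j 0 ↔ b.getD i 0 < b.getD j 0)

/-- `l` contains the pattern `p`: some subsequence of `l` is order-isomorphic to `p`. -/
def ContainsPat (l p : List ℕ) : Prop :=
  ∃ s, s.Sublist l ∧ OrderIsoList s p

/-- `l` avoids the pattern `p`. -/
def AvoidsPat (l p : List ℕ) : Prop := ¬ ContainsPat l p

/-- Relabel the entries of a list of distinct naturals order-isomorphically with `1,…,m`. -/
def standardize (l : List ℕ) : List ℕ :=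
  l.map fun x => (l.filter fun y => y ≤ x).length

/-- Insert the new maximum value `l.length + 1` immediately after the first `i` entries. -/
def insertMax (l : List ℕ) (i : ℕ) : List ℕ :=
  l.take i ++ (l.length + 1) :: l.drop i

/-- The insertion step at position `i` for the pattern `p`: insert a new maximum after the
first `i` entries, keep the longest prefix avoiding `p` (i.e. remove the minimal suffix so
that the result avoids `p`), then standardize. -/
noncomputable def insStep (p l : List ℕ) (i : ℕ) : List ℕ :=
  standardize ((insertMax l i).take
    (Nat.findGreatest (fun k => AvoidsPat ((insertMax l i).take k) p)
      (insertMax l i).length))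

/-- The entry at (0-indexed) position `i` of `l` is a right-to-left maximum: it is larger
than every entry to its right. -/
def IsRLMax (l : List ℕ) (i : ℕ) : Prop :=
  ∀ j, i < j → j < l.length → l.getD j 0 < l.getD i 0

/-- The number of short values of `l`: entries that are not right-to-left maxima. -/
noncomputable def shortCount (l : List ℕ) : ℕ :=
  {i | i < l.length ∧ ¬ IsRLMax l i}.ncard

/-- `A132 n k` is the set of `132`-avoiding permutations of length `n` with exactly `k`
short values. -/
def A132 (n k : ℕ) : Set (List ℕ) :=
  {l | IsPermList n l ∧ AvoidsPat l [1, 3, 2] ∧ shortCount l = k}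


open List

attribute [local instance] Classical.propDecidable

/-- explicit 132-freeness -/
def Free (l : List ℕ) : Prop := ∀ a b c : ℕ, [a,b,c] <+ l → a < c → c < b → False

lemma free_of_avoids {l : List ℕ} (h : AvoidsPat l [1,3,2]) : Free l := by
  intro a b c hsub h1 h2
  apply h
  refine ⟨[a,b,c], hsub, rfl, ?_⟩
  intro i j hij hj
  simp only [List.length_cons, List.length_nil] at hj
  interval_cases j <;> interval_cases i <;> simp [List.getD, List.getElem?_cons_succ, List.getElem?_cons_zero, Option.getD] <;> omega

lemma avoids_of_free {l : List ℕ} (hnd : l.Nodup) (h : Free l) : AvoidsPat l [1,3,2] := by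
  rintro ⟨s, hsub, hlen, hrel⟩
  have h3 : s.length = 3 := by simpa using hlen
  obtain ⟨a, b, c, rfl⟩ := List.length_eq_three.mp h3
  have hab : a < b := by have := hrel 0 1 (by omega) (by simp); simpa [List.getD, List.getElem?_cons_succ, List.getElem?_cons_zero, Option.getD] using this.mpr (by norm_num)
  have hac : a < c := by have := hrel 0 2 (by omega) (by simp); simpa [List.getD, List.getElem?_cons_succ, List.getElem?_cons_zero, Option.getD] using this.mpr (by norm_num)
  have hbc : ¬ b < c := by
    have := hrel 1 2 (by omega) (by simp)
    simp only [List.getD, List.getElem?_cons_succ, List.getElem?_cons_zero, Option.getD] at this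
    intro hlt
    have := this.mp (by simpa using hlt)
    omega
  have hnd' : List.Nodup [a,b,c] := hsub.nodup hnd
  have hne : b ≠ c := by simp [List.nodup_cons] at hnd'; tauto
  exact h a b c hsub hac (by omega)

lemma Free.sublist {l l' : List ℕ} (h : Free l) (hs : l' <+ l) : Free l' :=
  fun a b c hsub h1 h2 => h a b c (hsub.trans hs) h1 h2

lemma free_nil : Free ([] : List ℕ) := by
  intro a b c hsub _ _
  have := hsub.length_le; simp at this

lemma free_singleton (m : ℕ) : Free [m] := by
  intro a b c hsub _ _
  have := hsub.length_le; simp at this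

lemma triple_append_cases {a b c : ℕ} {l1 l2 : List ℕ} (h : [a,b,c] = l1 ++ l2) :
    (l1 = [] ∧ l2 = [a,b,c]) ∨ (l1 = [a] ∧ l2 = [b,c]) ∨ (l1 = [a,b] ∧ l2 = [c]) ∨
    (l1 = [a,b,c] ∧ l2 = []) := by
  rcases l1 with _|⟨w,_|⟨y,_|⟨z,rest⟩⟩⟩ <;> simp_all

lemma free_append {u v : List ℕ} (hu : Free u) (hv : Free v)
    (h : ∀ a ∈ u, ∀ b ∈ v, b < a) : Free (u ++ v) := by
  intro a b c hsub h1 h2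
  rw [List.sublist_append_iff] at hsub
  obtain ⟨l1, l2, heq, hs1, hs2⟩ := hsub
  rcases triple_append_cases heq with ⟨e1,e2⟩|⟨e1,e2⟩|⟨e1,e2⟩|⟨e1,e2⟩ <;> subst e1 <;> subst e2
  · exact hv a b c hs2 h1 h2
  · have ha : a ∈ u := hs1.subset (by simp)
    have hc : c ∈ v := hs2.subset (by simp)
    have := h a ha c hc; omega
  · have ha : a ∈ u := hs1.subset (by simp)
    have hc : c ∈ v := hs2.subset (by simp)
    have := h a ha c hc; omega
  · exact hu a b c hs1 h1 h2

lemma free_concat {u : List ℕ} {Q : ℕ} (hu : Free u)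
    (H : ∀ a b, [a,b] <+ u → a < Q → Q < b → False) : Free (u ++ [Q]) := by
  intro a b c hsub h1 h2
  rw [List.sublist_append_iff] at hsub
  obtain ⟨l1, l2, heq, hs1, hs2⟩ := hsub
  rcases triple_append_cases heq with ⟨e1,e2⟩|⟨e1,e2⟩|⟨e1,e2⟩|⟨e1,e2⟩ <;> subst e1 <;> subst e2
  · have := hs2.length_le; simp at this
  · have := hs2.length_le; simp at this
  · have hc : c = Q := by simpa using hs2.subset (by simp)
    subst hc
    exact H a b hs1 h1 h2
  · exact hu a b c hs1 h1 h2

lemma free_mid {u v : List ℕ} {m : ℕ} (hu : Free u) (hv : Free v)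
    (hum : ∀ a ∈ u, a < m) (huv : ∀ a ∈ u, ∀ b ∈ v, b < a) (hvm : ∀ b ∈ v, b < m) :
    Free (u ++ m :: v) := by
  intro a b c hsub h1 h2
  rw [List.sublist_append_iff] at hsub
  obtain ⟨l1, l2, heq, hs1, hs2⟩ := hsub
  rcases triple_append_cases heq with ⟨e1,e2⟩|⟨e1,e2⟩|⟨e1,e2⟩|⟨e1,e2⟩ <;> subst e1 <;> subst e2
  · rcases List.sublist_cons_iff.mp hs2 with hw | ⟨r, hr, hrs⟩
    · exact hv a b c hw h1 h2
    · have ha : a = m := by simpa using congrArg (·.head?) hr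
      have hr' : [b, c] = r := by simpa using congrArg (·.tail) hr
      subst ha
      rw [← hr'] at hrs
      have hc : c ∈ v := hrs.subset (by simp)
      have := hvm c hc; omega
  · have ha : a ∈ u := hs1.subset (by simp)
    rcases List.sublist_cons_iff.mp hs2 with hw | ⟨r, hr, hrs⟩
    · have hc : c ∈ v := hw.subset (by simp)
      have := huv a ha c hc; omega
    · have hb : b = m := by simpa using congrArg (·.head?) hr
      have hr' : [c] = r := by simpa using congrArg (·.tail) hr
      rw [← hr'] at hrs
      have hc : c ∈ v := hrs.subset (by simp)
      have := huv a ha c hc; omega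
  · have ha : a ∈ u := hs1.subset (by simp)
    have hb : b ∈ u := hs1.subset (by simp)
    rcases List.sublist_cons_iff.mp hs2 with hw | ⟨r, hr, hrs⟩
    · have hc : c ∈ v := hw.subset (by simp)
      have := huv a ha c hc; omega
    · have hc : c = m := by simpa using congrArg (·.head?) hr
      subst hc
      have := hum b hb; omega
  · exact hu a b c hs1 h1 h2

lemma split_big_small (x : ℕ) : ∀ (ys : List ℕ),
    (∀ a b, [a,b] <+ ys → a < x → x < b → False) → (∀ y ∈ ys, y ≠ x) →
    ys = ys.filter (fun y => decide (x < y)) ++ ys.filter (fun y => decide (y < x)) := by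
  intro ys
  induction ys with
  | nil => simp
  | cons c ys ih =>
    intro H hne
    have hcx : c ≠ x := hne c (by simp)
    by_cases hc : x < c
    · have h1 : ∀ a b, [a,b] <+ ys → a < x → x < b → False :=
        fun a b hs => H a b (hs.cons c)
      have h2 : ∀ y ∈ ys, y ≠ x := fun y hy => hne y (by simp [hy])
      rw [List.filter_cons_of_pos (by simpa using hc),
        List.filter_cons_of_neg (by simp; omega)]
      rw [List.cons_append]
      exact congrArg (c :: ·) (ih h1 h2)
    · have hclt : c < x := by omega
      have hall : ∀ b ∈ ys, b < x := by
        intro b hb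
        have hbne : b ≠ x := hne b (by simp [hb])
        have hsub : [c, b] <+ c :: ys := List.Sublist.cons₂ c (List.singleton_sublist.mpr hb)
        have : ¬ x < b := fun hxb => H c b hsub hclt hxb
        omega
      rw [List.filter_cons_of_neg (by simp; omega),
        List.filter_cons_of_pos (by simpa using hclt)]
      have e1 : ys.filter (fun y => decide (x < y)) = [] :=
        List.filter_eq_nil_iff.mpr (by intro a ha; simpa using by have := hall a ha; omega)
      have e2 : ys.filter (fun y => decide (y < x)) = ys :=
        List.filter_eq_self.mpr (by intro a ha; simpa using hall a ha)
      rw [e1, e2]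
      simp

lemma isRLMax_cons_succ {a : ℕ} {l : List ℕ} {i : ℕ} :
    IsRLMax (a :: l) (i+1) ↔ IsRLMax l i := by
  constructor
  · intro h j hij hj
    have := h (j+1) (by omega) (by simp; omega)
    simpa [List.getD_cons_succ] using this
  · intro h j hij hj
    obtain ⟨j', rfl⟩ : ∃ j', j = j'+1 := ⟨j-1, by omega⟩
    simp only [List.getD_cons_succ]
    exact h j' (by omega) (by simp at hj; omega)

lemma isRLMax_cons_zero {a : ℕ} {l : List ℕ} :
    IsRLMax (a :: l) 0 ↔ ∀ b ∈ l, b < a := by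
  constructor
  · intro h b hb
    obtain ⟨j, hj, rfl⟩ := List.mem_iff_getElem.mp hb
    have := h (j+1) (by omega) (by simp; omega)
    rwa [List.getD_cons_succ, List.getD_cons_zero, List.getD_eq_getElem _ _ hj] at this
  · intro h j hij hj
    obtain ⟨j', rfl⟩ : ∃ j', j = j'+1 := ⟨j-1, by omega⟩
    have hj' : j' < l.length := by simp at hj; omega
    simp only [List.getD_cons_succ, List.getD_cons_zero]
    rw [List.getD_eq_getElem _ _ hj']
    exact h _ (List.getElem_mem hj')

lemma shortSet_finite (l : List ℕ) : {i | i < l.length ∧ ¬ IsRLMax l i}.Finite :=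
  (Set.finite_lt_nat _).subset fun i hi => hi.1

lemma shortCount_nil : shortCount [] = 0 := by
  have : {i | i < ([] : List ℕ).length ∧ ¬ IsRLMax [] i} = ∅ := by
    ext i; simp
  simp [shortCount, this]

lemma shortCount_cons (a : ℕ) (l : List ℕ) :
    shortCount (a :: l) = (if ∀ b ∈ l, b < a then 0 else 1) + shortCount l := by
  classical
  have hinj : Function.Injective (fun i : ℕ => i + 1) := fun x y h => by simpa using h
  have himg : {i | i < (a::l).length ∧ ¬ IsRLMax (a::l) i} =
      (if ∀ b ∈ l, b < a then (∅ : Set ℕ) else {0}) ∪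
        (fun i => i+1) '' {i | i < l.length ∧ ¬ IsRLMax l i} := by
    ext i
    cases i with
    | zero =>
      simp only [Set.mem_setOf_eq, Set.mem_union, Set.mem_image]
      constructor
      · rintro ⟨-, hmax⟩
        left
        rw [isRLMax_cons_zero] at hmax
        simp [if_neg hmax]
      · rintro (h0 | ⟨j, hj, hj1⟩)
        · by_cases hc : ∀ b ∈ l, b < a
          · simp [if_pos hc] at h0
          · exact ⟨by simp, by rw [isRLMax_cons_zero]; exact hc⟩
        · simp at hj1
      | succ i =>
      simp only [Set.mem_setOf_eq, Set.mem_union, Set.mem_image]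
      constructor
      · rintro ⟨hlen, hmax⟩
        right
        exact ⟨i, ⟨by simp at hlen; omega, fun h => hmax (isRLMax_cons_succ.mpr h)⟩, rfl⟩
      · rintro (h0 | ⟨j, ⟨hj1, hj2⟩, hj3⟩)
        · split at h0 <;> simp at h0
        · have : j = i := by omega
          subst this
          exact ⟨by simp; omega, fun h => hj2 (isRLMax_cons_succ.mp h)⟩
  have hd : Disjoint (if ∀ b ∈ l, b < a then (∅ : Set ℕ) else {0})
      ((fun i => i+1) '' {i | i < l.length ∧ ¬ IsRLMax l i}) := by
    refine Set.disjoint_left.mpr ?_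
    intro i hi himg'
    obtain ⟨j, -, hj⟩ := himg'
    simp only at hj
    split at hi <;> simp at hi
    omega
  have h1 : (if ∀ b ∈ l, b < a then (∅ : Set ℕ) else {0}).Finite := by
    split
    · exact Set.finite_empty
    · exact Set.finite_singleton 0
  have h2 : ((fun i : ℕ => i+1) '' {i | i < l.length ∧ ¬ IsRLMax l i}).Finite :=
    (shortSet_finite l).image _
  rw [shortCount, himg, Set.ncard_union_eq hd h1 h2, Set.ncard_image_of_injective _ hinj]
  congr 1
  split <;> simp

lemma shortCount_append_high : ∀ (u v : List ℕ), (∀ a ∈ u, ∀ b ∈ v, b < a) →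
    shortCount (u ++ v) = shortCount u + shortCount v := by
  intro u
  induction u with
  | nil => intro v _; simp [shortCount_nil]
  | cons c u ih =>
    intro v h
    rw [List.cons_append, shortCount_cons, shortCount_cons,
      ih v (fun a ha b hb => h a (by simp [ha]) b hb)]
    have hcv : ∀ b ∈ v, b < c := fun b hb => h c (by simp) b hb
    by_cases hc : ∀ b ∈ u, b < c
    · rw [if_pos (by intro b hb; rcases List.mem_append.mp hb with h' | h'
                     · exact hc b h'
                     · exact hcv b h'), if_pos hc]
      omega
    · rw [if_neg (by intro hall; exact hc fun b hb => hall b (by simp [hb])), if_neg hc]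
      omega

lemma shortCount_append_low : ∀ (u v : List ℕ), (∀ a ∈ u, ∃ b ∈ v, a < b) →
    shortCount (u ++ v) = u.length + shortCount v := by
  intro u
  induction u with
  | nil => intro v _; simp [shortCount_nil]
  | cons c u ih =>
    intro v h
    rw [List.cons_append, shortCount_cons, ih v (fun a ha => h a (by simp [ha]))]
    obtain ⟨b, hb, hcb⟩ := h c (by simp)
    rw [if_neg (by intro hall; have := hall b (by simp [hb]); omega)]
    simp; omega

lemma shortCount_singleton (x : ℕ) : shortCount [x] = 0 := by
  rw [shortCount_cons, shortCount_nil, if_pos (by simp)]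

lemma filter_lt_range'_perm {s n x : ℕ} (hx : s ≤ x) (hx2 : x ≤ s + n) :
    ((range' s n).filter (fun v => decide (v < x))) ~ range' s (x - s) := by
  rw [List.perm_ext_iff_of_nodup ((List.nodup_range' 1).filter _) (List.nodup_range' 1)]
  intro a
  simp only [List.mem_filter, List.mem_range'_1, decide_eq_true_eq]
  omega

lemma filter_gt_range'_perm {s n x : ℕ} (hx : s ≤ x + 1) :
    ((range' s n).filter (fun v => decide (x < v))) ~ range' (x+1) (s + n - (x+1)) := by
  rw [List.perm_ext_iff_of_nodup ((List.nodup_range' 1).filter _) (List.nodup_range' 1)]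
  intro a
  simp only [List.mem_filter, List.mem_range'_1, decide_eq_true_eq]
  omega

lemma perm_cancel_right {u u' v v' : List ℕ} (h : u ++ v ~ u' ++ v') (hv : v ~ v') : u ~ u' := by
  have h2 : u ++ v ~ u' ++ v := h.trans (hv.symm.append_left u')
  exact (List.perm_append_right_iff v).mp h2

lemma perm_range_of (B : List ℕ) (hnd : B.Nodup) (h1 : ∀ b ∈ B, 1 ≤ b)
    (hdc : ∀ b ∈ B, ∀ c, 1 ≤ c → c ≤ b → c ∈ B) : B ~ range' 1 B.length := by
  have hub : ∀ b ∈ B, b ≤ B.length := by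
    intro b hb
    have hsub : range' 1 b ⊆ B := by
      intro c hc
      rw [List.mem_range'_1] at hc
      exact hdc b hb c hc.1 (by omega)
    have := (List.subperm_of_subset (List.nodup_range' 1) hsub).length_le
    simpa using this
  have hBsub : B ⊆ range' 1 B.length := by
    intro b hb
    rw [List.mem_range'_1]
    exact ⟨h1 b hb, by have := hub b hb; omega⟩
  exact (List.subperm_of_subset hnd hBsub).perm_of_length_le (by simp)

lemma range'_split (s m k : ℕ) (h : k ≤ m) :
    range' s m = range' s k ++ range' (s+k) (m-k) := by
  have h2 := List.range'_append (s := s) (m := k) (n := m-k) (step := 1)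
  simp only [one_mul] at h2
  calc range' s m = range' s ((m-k)+k) := by congr 1; omega
    _ = _ := by rw [show m - k + k = k + (m - k) by omega]; exact h2.symm

lemma map_add_one_range' (s n : ℕ) : (range' s n).map (fun v => v + 1) = range' (s+1) n := by
  rw [List.range'_eq_map_range, List.range'_eq_map_range, List.map_map]
  congr 1
  funext x; simp; omega

lemma map_sub_one_range' (s n : ℕ) : (range' (s+1) n).map (fun v => v - 1) = range' s n := by
  rw [List.range'_eq_map_range, List.range'_eq_map_range, List.map_map]
  congr 1
  funext x; simp

lemma Free.map_mono {l : List ℕ} (h : Free l) (f : ℕ → ℕ)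
    (hf : ∀ a ∈ l, ∀ b ∈ l, f a < f b → a < b) : Free (l.map f) := by
  intro a b c hsub h1 h2
  rw [List.sublist_map_iff] at hsub
  obtain ⟨l', hsub', heq⟩ := hsub
  have h3 : l'.length = 3 := by
    have := congrArg List.length heq
    simpa using this.symm
  obtain ⟨a', b', c', rfl⟩ := List.length_eq_three.mp h3
  simp only [List.map_cons, List.map_nil, List.cons.injEq, and_true] at heq
  obtain ⟨ha, hb, hc⟩ := heq
  subst ha; subst hb; subst hc
  have ha' : a' ∈ l := hsub'.subset (by simp)
  have hb' : b' ∈ l := hsub'.subset (by simp)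
  have hc' : c' ∈ l := hsub'.subset (by simp)
  exact h a' b' c' hsub' (hf _ ha' _ hc' h1) (hf _ hc' _ hb' h2)

lemma append_cons_unique {m : ℕ} : ∀ {u : List ℕ} {u' v v' : List ℕ},
    u ++ m :: v = u' ++ m :: v' → m ∉ u → m ∉ u' → u = u' ∧ v = v' := by
  intro u
  induction u with
  | nil =>
    intro u' v v' h hm hm'
    cases u' with
    | nil => simpa using h
    | cons c u' =>
      simp only [List.nil_append, List.cons_append, List.cons.injEq] at h
      exact absurd (h.1 ▸ List.mem_cons_self (a := m) (l := u' ++ m :: v')) (by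
        intro hmem
        exact hm' (by rw [h.1]; simp))
  | cons c u ih =>
    intro u' v v' h hm hm'
    cases u' with
    | nil =>
      simp only [List.cons_append, List.nil_append, List.cons.injEq] at h
      exact absurd h.1 (by intro hcm; exact hm (by rw [hcm]; simp))
    | cons c' u' =>
      simp only [List.cons_append, List.cons.injEq] at h
      obtain ⟨rfl, h2⟩ := h
      have := ih h2 (fun hh => hm (by simp [hh])) (fun hh => hm' (by simp [hh]))
      exact ⟨by rw [this.1], this.2⟩

structure Quad where
  al : List ℕ
  g : List ℕ
  B : List ℕ
  x : ℕ

def Par (n r : ℕ) : Set Quad :=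
  {p | Free p.al ∧ Free p.g ∧ Free p.B ∧
    p.al.Perm (range' (p.x+1) (n-p.x)) ∧
    p.g.Perm (range' (p.B.length+1) (p.x-2-p.B.length)) ∧
    p.B.Perm (range' 1 p.B.length) ∧
    2 ≤ p.x ∧ p.x ≤ n ∧ p.B.length + 2 ≤ p.x ∧
    shortCount p.al + p.x = r + 1}

def Fm (p : Quad) : List ℕ := p.al ++ (p.g ++ ((p.x - 1) :: (p.B ++ [p.x])))

def Gm (p : Quad) : List ℕ :=
  p.al ++ (p.g.map (fun v => v+1) ++ (p.x :: (p.B ++ [p.B.length + 1])))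

lemma Par_intro {n r : ℕ} {al g B : List ℕ} {x : ℕ}
    (h1 : Free al) (h2 : Free g) (h3 : Free B)
    (h4 : al.Perm (range' (x+1) (n-x)))
    (h5 : g.Perm (range' (B.length+1) (x-2-B.length)))
    (h6 : B.Perm (range' 1 B.length)) (h7 : 2 ≤ x) (h8 : x ≤ n)
    (h9 : B.length + 2 ≤ x) (h10 : shortCount al + x = r + 1) :
    (⟨al, g, B, x⟩ : Quad) ∈ Par n r :=
  ⟨h1, h2, h3, h4, h5, h6, h7, h8, h9, h10⟩

lemma mem_of_perm_range' {l : List ℕ} {s n : ℕ} (h : l.Perm (range' s n)) :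
    ∀ a ∈ l, s ≤ a ∧ a < s + n := fun a ha => List.mem_range'_1.mp (h.subset ha)

lemma Fm_perm {n r : ℕ} {al g B : List ℕ} {x : ℕ}
    (hp : (⟨al, g, B, x⟩ : Quad) ∈ Par n r) : (Fm ⟨al, g, B, x⟩).Perm (range' 1 n) := by
  obtain ⟨hfal, hfg, hfB, hpal, hpg, hpB, hx2, hxn, ht2, hsc⟩ := hp
  simp only at *
  set t := B.length with hht
  have c1 : range' 1 t ++ range' (t+1) (x-2-t) = range' 1 (x-2) := by
    have := range'_split 1 (x-2) t (by omega)
    rw [this]; congr 2; omega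
  have c2 : range' 1 (x-2) ++ [x-1] = range' 1 (x-1) := by
    have := List.range'_concat (step := 1) (s := 1) (n := (x-2))
    simp only [one_mul] at this
    rw [show x - 1 = (x-2) + 1 by omega, this]
    congr 2; omega
  have c3 : range' 1 (x-1) ++ [x] = range' 1 x := by
    have := List.range'_concat (step := 1) (s := 1) (n := (x-1))
    simp only [one_mul] at this
    rw [show x = (x-1) + 1 from by omega, this]
    congr 2; omega
  have c4 : range' 1 x ++ range' (x+1) (n-x) = range' 1 n := by
    have := range'_split 1 n x (by omega)
    rw [this]; congr 2; omega
  rw [← Multiset.coe_eq_coe]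
  have hd : (↑(range' 1 n) : Multiset ℕ) = ↑(range' 1 t) + ↑(range' (t+1) (x-2-t)) +
      ↑([x-1] : List ℕ) + ↑([x] : List ℕ) + ↑(range' (x+1) (n-x)) := by
    simp only [Multiset.coe_add]
    rw [← Multiset.coe_eq_coe.mpr (List.Perm.refl _)]
    congr 1
    rw [c1, c2, c3, c4]
  rw [hd]
  have e1 : (↑al : Multiset ℕ) = ↑(range' (x+1) (n-x)) := Multiset.coe_eq_coe.mpr hpal
  have e2 : (↑g : Multiset ℕ) = ↑(range' (t+1) (x-2-t)) := Multiset.coe_eq_coe.mpr hpg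
  have e3 : (↑B : Multiset ℕ) = ↑(range' 1 t) := Multiset.coe_eq_coe.mpr hpB
  show (↑(al ++ (g ++ ((x - 1) :: (B ++ [x])))) : Multiset ℕ) = _
  have : ((x-1) :: (B ++ [x])) = [x-1] ++ (B ++ [x]) := rfl
  rw [this]
  simp only [← Multiset.coe_add, e1, e2, e3]
  abel

lemma Fm_mem {n r : ℕ} {al g B : List ℕ} {x : ℕ}
    (hp : (⟨al, g, B, x⟩ : Quad) ∈ Par n r) :
    Fm ⟨al, g, B, x⟩ ∈ {l | l ∈ A132 n r ∧ ∃ y, l.getLast? = some y ∧ 1 < y} := by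
  have hperm := Fm_perm hp
  obtain ⟨hfal, hfg, hfB, hpal, hpg, hpB, hx2, hxn, ht2, hsc⟩ := hp
  simp only at *
  set t := B.length with hht
  have hal := mem_of_perm_range' hpal
  have hg := mem_of_perm_range' hpg
  have hB := mem_of_perm_range' hpB
  have hW : Fm ⟨al, g, B, x⟩ = al ++ (g ++ ((x - 1) :: (B ++ [x]))) := rfl
  -- freeness
  have hfmid : Free (g ++ (x-1) :: B) := by
    apply free_mid hfg hfB
    · intro a ha; have := hg a ha; omega
    · intro a ha b hb; have := hg a ha; have := hB b hb; omega
    · intro b hb; have := hB b hb; omega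
  have hfw : Free ((g ++ (x-1) :: B) ++ [x]) := by
    apply free_concat hfmid
    intro a b hs h1 h2
    have hbmem : b ∈ g ++ (x-1) :: B := hs.subset (by simp)
    rcases List.mem_append.mp hbmem with h' | h'
    · have := hg b h'; omega
    · rcases List.mem_cons.mp h' with h'' | h''
      · omega
      · have := hB b h''; omega
  have hfree : Free (Fm ⟨al, g, B, x⟩) := by
    rw [hW, show g ++ ((x - 1) :: (B ++ [x])) = (g ++ (x-1) :: B) ++ [x] by
      simp [List.append_assoc]]
    apply free_append hfal hfw
    intro a ha b hb
    have ha' := hal a ha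
    rcases List.mem_append.mp hb with h' | h'
    · rcases List.mem_append.mp h' with h2 | h2
      · have := hg b h2; omega
      · rcases List.mem_cons.mp h2 with h3 | h3
        · omega
        · have := hB b h3; omega
    · simp at h'; omega
  have hnd : (Fm ⟨al, g, B, x⟩).Nodup :=
    hperm.nodup_iff.mpr (List.nodup_range' 1)
  -- short count
  have hsc2 : shortCount (Fm ⟨al, g, B, x⟩) = r := by
    rw [hW, show g ++ ((x - 1) :: (B ++ [x])) = (g ++ (x-1) :: B) ++ [x] by
      simp [List.append_assoc]]
    rw [shortCount_append_high al ((g ++ (x-1) :: B) ++ [x]) ?hh]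
    case hh =>
      intro a ha b hb
      have ha' := hal a ha
      rcases List.mem_append.mp hb with h' | h'
      · rcases List.mem_append.mp h' with h2 | h2
        · have := hg b h2; omega
        · rcases List.mem_cons.mp h2 with h3 | h3
          · omega
          · have := hB b h3; omega
      · simp at h'; omega
    rw [shortCount_append_low (g ++ (x-1) :: B) [x] ?hl]
    case hl =>
      intro a ha
      refine ⟨x, by simp, ?_⟩
      rcases List.mem_append.mp ha with h' | h'
      · have := hg a h'; omega
      · rcases List.mem_cons.mp h' with h'' | h''
        · omega
        · have := hB a h''; omega
    rw [shortCount_singleton]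
    have hglen : g.length = x - 2 - t := hpg.length_eq.trans (by simp)
    simp only [List.length_append, List.length_cons, hglen]
    omega
  -- last
  have hlast : (Fm ⟨al, g, B, x⟩).getLast? = some x := by
    rw [hW, show al ++ (g ++ ((x - 1) :: (B ++ [x]))) =
      (al ++ (g ++ ((x - 1) :: B))) ++ [x] by simp [List.append_assoc]]
    exact List.getLast?_concat
  exact ⟨⟨hperm, avoids_of_free hnd hfree, hsc2⟩, x, hlast, by omega⟩

lemma Gm_perm {n r : ℕ} {al g B : List ℕ} {x : ℕ}
    (hp : (⟨al, g, B, x⟩ : Quad) ∈ Par n r) : (Gm ⟨al, g, B, x⟩).Perm (range' 1 n) := by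
  obtain ⟨hfal, hfg, hfB, hpal, hpg, hpB, hx2, hxn, ht2, hsc⟩ := hp
  simp only at *
  set t := B.length with hht
  have c1 : range' 1 t ++ [t+1] = range' 1 (t+1) := by
    have := List.range'_concat (step := 1) (s := 1) (n := t)
    simp only [one_mul] at this
    rw [this]; congr 2; omega
  have c2 : range' 1 (t+1) ++ range' (t+2) (x-2-t) = range' 1 (x-1) := by
    have := range'_split 1 (x-1) (t+1) (by omega)
    rw [this]; congr 2 <;> omega
  have c3 : range' 1 (x-1) ++ [x] = range' 1 x := by
    have := List.range'_concat (step := 1) (s := 1) (n := (x-1))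
    simp only [one_mul] at this
    rw [show x = (x-1) + 1 from by omega, this]
    congr 2; omega
  have c4 : range' 1 x ++ range' (x+1) (n-x) = range' 1 n := by
    have := range'_split 1 n x (by omega)
    rw [this]; congr 2; omega
  rw [← Multiset.coe_eq_coe]
  have hd : (↑(range' 1 n) : Multiset ℕ) = ↑(range' 1 t) + ↑([t+1] : List ℕ) +
      ↑(range' (t+2) (x-2-t)) + ↑([x] : List ℕ) + ↑(range' (x+1) (n-x)) := by
    simp only [Multiset.coe_add]
    rw [← Multiset.coe_eq_coe.mpr (List.Perm.refl _)]
    congr 1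
    rw [c1, c2, c3, c4]
  rw [hd]
  have e1 : (↑al : Multiset ℕ) = ↑(range' (x+1) (n-x)) := Multiset.coe_eq_coe.mpr hpal
  have e2 : (↑(g.map (fun v => v+1)) : Multiset ℕ) = ↑(range' (t+2) (x-2-t)) := by
    refine Multiset.coe_eq_coe.mpr ?_
    have := hpg.map (fun v => v+1)
    rw [map_add_one_range'] at this
    exact this.trans (by rw [show t+1+1 = t+2 from rfl])
  have e3 : (↑B : Multiset ℕ) = ↑(range' 1 t) := Multiset.coe_eq_coe.mpr hpB
  rw [show Gm ⟨al, g, B, x⟩ = al ++ (g.map (fun v => v+1) ++ ([x] ++ (B ++ [t+1]))) from rfl]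
  simp only [← Multiset.coe_add, e1, e2, e3]
  abel

lemma Gm_mem {n r : ℕ} {al g B : List ℕ} {x : ℕ}
    (hp : (⟨al, g, B, x⟩ : Quad) ∈ Par n r) :
    Gm ⟨al, g, B, x⟩ ∈ A132 n (r-1) := by
  have hperm := Gm_perm hp
  obtain ⟨hfal, hfg, hfB, hpal, hpg, hpB, hx2, hxn, ht2, hsc⟩ := hp
  simp only at *
  set t := B.length with hht
  have hal := mem_of_perm_range' hpal
  have hg := mem_of_perm_range' hpg
  have hB := mem_of_perm_range' hpB
  have hgm : ∀ a ∈ g.map (fun v => v+1), t+2 ≤ a ∧ a ≤ x-1 := by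
    intro a ha
    simp only [List.mem_map] at ha
    obtain ⟨a₀, h₀, rfl⟩ := ha
    have := hg a₀ h₀; omega
  have hvmem : ∀ b ∈ B ++ [t+1], b ≤ t+1 := by
    intro b hb
    rcases List.mem_append.mp hb with h' | h'
    · have := hB b h'; omega
    · simp at h'; omega
  have hW : Gm ⟨al, g, B, x⟩ = al ++ (g.map (fun v => v+1) ++ (x :: (B ++ [t+1]))) := rfl
  have hfv : Free (B ++ [t+1]) := by
    apply free_concat hfB
    intro a b hs _ h2
    have : b ∈ B := hs.subset (by simp)
    have := hB b this; omega
  have hfu : Free (g.map (fun v => v+1)) :=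
    hfg.map_mono _ (fun a _ b _ h => by omega)
  have hfmid : Free (g.map (fun v => v+1) ++ x :: (B ++ [t+1])) := by
    apply free_mid hfu hfv
    · intro a ha; have := hgm a ha; omega
    · intro a ha b hb; have := hgm a ha; have := hvmem b hb; omega
    · intro b hb; have := hvmem b hb; omega
  have hfree : Free (Gm ⟨al, g, B, x⟩) := by
    rw [hW]
    apply free_append hfal hfmid
    intro a ha b hb
    have ha' := hal a ha
    rcases List.mem_append.mp hb with h' | h'
    · have := hgm b h'; omega
    · rcases List.mem_cons.mp h' with h'' | h''
      · omega
      · have := hvmem b h''; omega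
  have hnd : (Gm ⟨al, g, B, x⟩).Nodup := hperm.nodup_iff.mpr (List.nodup_range' 1)
  have hsc2 : shortCount (Gm ⟨al, g, B, x⟩) = r - 1 := by
    rw [hW]
    rw [shortCount_append_high al _ ?hh]
    case hh =>
      intro a ha b hb
      have ha' := hal a ha
      rcases List.mem_append.mp hb with h' | h'
      · have := hgm b h'; omega
      · rcases List.mem_cons.mp h' with h'' | h''
        · omega
        · have := hvmem b h''; omega
    rw [shortCount_append_low (g.map (fun v => v+1)) _ ?hl]
    case hl =>
      intro a ha
      exact ⟨x, by simp, by have := hgm a ha; omega⟩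
    rw [shortCount_cons, if_pos (by intro b hb; have := hvmem b hb; omega)]
    rw [shortCount_append_low B [t+1] (fun a ha => ⟨t+1, by simp, by have := hB a ha; omega⟩)]
    rw [shortCount_singleton]
    have hglen : (g.map (fun v => v+1)).length = x - 2 - t := by
      rw [List.length_map]
      exact hpg.length_eq.trans (by simp)
    rw [hglen]
    omega
  exact ⟨hperm, avoids_of_free hnd hfree, hsc2⟩

lemma free_getLast_split {l : List ℕ} {x : ℕ} (hnd : l.Nodup) (hfree : Free l)
    (hlast : l.getLast? = some x) :
    l = (l.filter (fun v => decide (x < v))) ++ ((l.filter (fun v => decide (v < x))) ++ [x]) := by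
  have hne : l ≠ [] := by intro h; rw [h] at hlast; simp at hlast
  have hgl : l.getLast hne = x := by
    have := (List.getLast?_eq_getLast hne).symm.trans hlast
    exact Option.some.inj this
  have hl : l.dropLast ++ [x] = l := by
    rw [← hgl]; exact List.dropLast_append_getLast hne
  set ys := l.dropLast with hys
  have hxnotin : x ∉ ys := by
    have hnd2 : (ys ++ [x]).Nodup := by rw [hl]; exact hnd
    have := (List.nodup_append.mp hnd2).2.2
    intro hmem
    exact this x hmem x (by simp) rfl
  have H : ∀ a b, [a,b] <+ ys → a < x → x < b → False := by
    intro a b hs h1 h2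
    have hs3 : [a,b,x] <+ l := by
      rw [← hl]
      have h4 : [a,b] ++ [x] <+ ys ++ [x] := hs.append (List.Sublist.refl _)
      simpa using h4
    exact hfree a b x hs3 h1 h2
  have hsplit := split_big_small x ys H (fun y hy hyx => hxnotin (hyx ▸ hy))
  have hf1 : l.filter (fun v => decide (x < v)) = ys.filter (fun v => decide (x < v)) := by
    rw [← hl, List.filter_append]; simp
  have hf2 : l.filter (fun v => decide (v < x)) = ys.filter (fun v => decide (v < x)) := by
    rw [← hl, List.filter_append]; simp
  rw [hf1, hf2, ← List.append_assoc, ← hsplit, hl]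

lemma LHS_sub {n r : ℕ} :
    {l | l ∈ A132 n r ∧ ∃ y, l.getLast? = some y ∧ 1 < y} ⊆ Fm '' Par n r := by
  rintro l ⟨⟨hperm, havoid, hsc⟩, x, hlast, hx1⟩
  have hnd : l.Nodup := hperm.nodup_iff.mpr (List.nodup_range' 1)
  have hfree : Free l := free_of_avoids havoid
  have hsplit := free_getLast_split hnd hfree hlast
  set A := l.filter (fun v => decide (x < v)) with hA
  set β := l.filter (fun v => decide (v < x)) with hβ
  have hxmem : x ∈ l := by rw [hsplit]; simp
  have hxn : 1 ≤ x ∧ x < 1 + n := mem_of_perm_range' hperm x hxmem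
  have hpA : A ~ range' (x+1) (n - x) := by
    refine (hperm.filter (fun v => decide (x < v))).trans ?_
    have h0 := filter_gt_range'_perm (s := 1) (n := n) (x := x) (by omega)
    refine h0.trans ?_
    rw [show 1 + n - (x+1) = n - x from by omega]
  have hpβ : β ~ range' 1 (x-1) := by
    refine (hperm.filter (fun v => decide (v < x))).trans ?_
    have h0 := filter_lt_range'_perm (s := 1) (n := n) (x := x) (by omega) (by omega)
    simpa using h0
  have hx1m : x - 1 ∈ β := by
    apply hpβ.symm.subset
    rw [List.mem_range'_1]; omega
  obtain ⟨bL, bR, hbsplit⟩ := List.append_of_mem hx1m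
  have hfA : Free A := hfree.sublist (List.filter_sublist)
  have hfβ : Free β := hfree.sublist (List.filter_sublist)
  have hndβ : β.Nodup := hpβ.nodup_iff.mpr (List.nodup_range' 1)
  have hfbL : Free bL := hfβ.sublist (by rw [hbsplit]; exact List.sublist_append_left _ _)
  have hfbR : Free bR := hfβ.sublist (by
    rw [hbsplit]
    exact ((List.sublist_cons_self _ _).trans (List.sublist_append_right _ _)))
  have hβmem : ∀ b ∈ β, 1 ≤ b ∧ b < x := fun b hb => by
    have := mem_of_perm_range' hpβ b hb; omega
  have hndsplit : (bL ++ (x-1) :: bR).Nodup := hbsplit ▸ hndβ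
  have hx1bR : (x-1) ∉ bR := by
    have h1 : ((x-1) :: bR).Nodup := (List.nodup_append.mp hndsplit).2.1
    exact (List.nodup_cons.mp h1).1
  have hdisj := (List.nodup_append.mp hndsplit).2.2
  have hbLbR : ∀ a ∈ bL, ∀ b ∈ bR, b < a := by
    intro a ha b hb
    have hsub : [a, x-1, b] <+ β := by
      rw [hbsplit]
      have h1 : [a] <+ bL := List.singleton_sublist.mpr ha
      have h2 : (x-1) :: [b] <+ (x-1) :: bR := List.Sublist.cons₂ _ (List.singleton_sublist.mpr hb)
      simpa using h1.append h2
    have hbne : b ≠ a := by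
      intro h; subst h
      exact hdisj _ ha _ (by simp [hb]) rfl
    have hbβ : b ∈ β := by rw [hbsplit]; simp [hb]
    have hbx : b < x - 1 := by
      have h2 := hβmem b hbβ
      have h3 : b ≠ x - 1 := fun h => hx1bR (h ▸ hb)
      omega
    by_contra hab
    exact hfβ a (x-1) b hsub (by omega) (by omega)
  have hdc : ∀ b ∈ bR, ∀ c, 1 ≤ c → c ≤ b → c ∈ bR := by
    intro b hb c hc1 hcb
    have hbβ : b ∈ β := by rw [hbsplit]; simp [hb]
    have hbx : b ≠ x-1 := fun h => hx1bR (h ▸ hb)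
    have hbb := hβmem b hbβ
    have hcβ : c ∈ β := by
      apply hpβ.symm.subset
      rw [List.mem_range'_1]
      omega
    rw [hbsplit] at hcβ
    rcases List.mem_append.mp hcβ with h' | h'
    · have := hbLbR c h' b hb; omega
    · rcases List.mem_cons.mp h' with h'' | h''
      · omega
      · exact h''
  have hndbR : bR.Nodup :=
    (List.nodup_cons.mp (List.nodup_append.mp hndsplit).2.1).2
  set t := bR.length with hht
  have hpbR : bR ~ range' 1 t :=
    perm_range_of bR hndbR
      (fun b hb => (hβmem b (by rw [hbsplit]; simp [hb])).1) hdc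
  have hβlen : β.length = x - 1 := hpβ.length_eq.trans (by simp)
  have hlen2 : bL.length + 1 + t = x - 1 := by
    rw [hbsplit] at hβlen
    simp only [List.length_append, List.length_cons] at hβlen
    omega
  have htx : t + 2 ≤ x := by omega
  have hpbL : bL ~ range' (t+1) (x-2-t) := by
    have h1 : bL ++ ((x-1) :: bR) ~ range' 1 (x-1) := hbsplit ▸ hpβ
    have h2 : (x-1) :: bR ~ bR ++ [x-1] := (List.perm_append_singleton _ _).symm
    have h3 : bL ++ (bR ++ [x-1]) ~ range' 1 (x-1) := ((h2.append_left bL).symm).trans h1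
    have hr1 : range' 1 (x-1) = range' 1 (x-2) ++ [x-1] := by
      have h0 := List.range'_concat (step := 1) (s := 1) (n := (x-2))
      simp only [one_mul] at h0
      rw [show x-1 = (x-2)+1 from by omega, h0]; congr 2; omega
    have h4 : (bL ++ bR) ++ [x-1] ~ range' 1 (x-2) ++ [x-1] := by
      rw [List.append_assoc]
      exact h3.trans (by rw [hr1])
    have h5 : bL ++ bR ~ range' 1 (x-2) := (List.perm_append_right_iff _).mp h4
    have h6 : range' 1 (x-2) = range' 1 t ++ range' (t+1) (x-2-t) := by
      have h0 := range'_split 1 (x-2) t (by omega)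
      rw [h0]; congr 2; omega
    have h7 : bL ++ bR ~ range' (t+1) (x-2-t) ++ range' 1 t := by
      rw [h6] at h5; exact h5.trans List.perm_append_comm
    exact perm_cancel_right h7 hpbR
  have hsc_al : shortCount A + x = r + 1 := by
    have hs1 : shortCount l = shortCount A + shortCount (β ++ [x]) := by
      conv_lhs => rw [hsplit]
      apply shortCount_append_high
      intro a ha b hb
      have := mem_of_perm_range' hpA a ha
      rcases List.mem_append.mp hb with h' | h'
      · have := hβmem b h'; omega
      · simp at h'; omega
    have hs2 : shortCount (β ++ [x]) = β.length := by
      rw [shortCount_append_low β [x] (fun a ha => ⟨x, by simp, (hβmem a ha).2⟩),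
        shortCount_singleton]
      omega
    rw [hs1, hs2, hβlen] at hsc
    omega
  refine ⟨⟨A, bL, bR, x⟩,
    Par_intro hfA hfbL hfbR hpA hpbL hpbR (by omega) (by omega) (by omega) hsc_al, ?_⟩
  · show A ++ (bL ++ ((x - 1) :: (bR ++ [x]))) = l
    conv_rhs => rw [hsplit, hbsplit]
    simp [List.append_assoc]

lemma RHS_sub {n r : ℕ} (hn : 2 ≤ n) (hr1 : 1 ≤ r) (hr2 : r ≤ n - 1) :
    A132 n (r-1) ⊆ Gm '' Par n r := by
  rintro l ⟨hperm, havoid, hsc⟩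
  have hnd : l.Nodup := hperm.nodup_iff.mpr (List.nodup_range' 1)
  have hfree : Free l := free_of_avoids havoid
  have hlength : l.length = n := hperm.length_eq.trans (by simp)
  have hne : l ≠ [] := by
    intro h; rw [h] at hlength; simp at hlength; omega
  set y := l.getLast hne with hy
  have hlast : l.getLast? = some y := List.getLast?_eq_getLast hne
  have hsplit := free_getLast_split hnd hfree hlast
  set Abig := l.filter (fun v => decide (y < v)) with hAbig
  set B := l.filter (fun v => decide (v < y)) with hB
  have hymem : y ∈ l := List.getLast_mem hne
  have hyn : 1 ≤ y ∧ y < 1 + n := mem_of_perm_range' hperm y hymem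
  have hpB : B ~ range' 1 (y-1) := by
    refine (hperm.filter (fun v => decide (v < y))).trans ?_
    have h0 := filter_lt_range'_perm (s := 1) (n := n) (x := y) (by omega) (by omega)
    simpa using h0
  have hpAbig : Abig ~ range' (y+1) (n - y) := by
    refine (hperm.filter (fun v => decide (y < v))).trans ?_
    have h0 := filter_gt_range'_perm (s := 1) (n := n) (x := y) (by omega)
    refine h0.trans ?_
    rw [show 1 + n - (y+1) = n - y from by omega]
  have hBmem : ∀ b ∈ B, 1 ≤ b ∧ b < y := fun b hb => by
    have := mem_of_perm_range' hpB b hb; omega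
  have hAmem : ∀ a ∈ Abig, y + 1 ≤ a ∧ a ≤ n := fun a ha => by
    have := mem_of_perm_range' hpAbig a ha; omega
  have hBlen : B.length = y - 1 := hpB.length_eq.trans (by simp)
  -- shortCount split
  have hs1 : shortCount l = shortCount Abig + shortCount (B ++ [y]) := by
    conv_lhs => rw [hsplit]
    apply shortCount_append_high
    intro a ha b hb
    have := hAmem a ha
    rcases List.mem_append.mp hb with h' | h'
    · have := hBmem b h'; omega
    · simp at h'; omega
  have hs2 : shortCount (B ++ [y]) = y - 1 := by
    rw [shortCount_append_low B [y] (fun a ha => ⟨y, by simp, (hBmem a ha).2⟩),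
      shortCount_singleton, hBlen]
    omega
  have hyne : y ≠ n := by
    intro hyn'
    have hA0 : Abig.length = 0 := by
      rw [hpAbig.length_eq]; simp; omega
    have hAnil : Abig = [] := List.length_eq_zero_iff.mp hA0
    have : shortCount Abig = 0 := by rw [hAnil, shortCount_nil]
    rw [hs1, hs2, this] at hsc
    omega
  have hAne : Abig ≠ [] := by
    intro h
    have := hpAbig.length_eq
    rw [h] at this; simp at this
    omega
  set x := Abig.getLast hAne with hx
  have hlastA : Abig.getLast? = some x := List.getLast?_eq_getLast hAne
  have hfA : Free Abig := hfree.sublist (List.filter_sublist)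
  have hndA : Abig.Nodup := hpAbig.nodup_iff.mpr (List.nodup_range' 1)
  have hsplit2 := free_getLast_split hndA hfA hlastA
  set al := Abig.filter (fun v => decide (x < v)) with hal
  set h := Abig.filter (fun v => decide (v < x)) with hh
  have hxmem : x ∈ Abig := List.getLast_mem hAne
  have hxb := hAmem x hxmem
  have hpal : al ~ range' (x+1) (n - x) := by
    refine (hpAbig.filter (fun v => decide (x < v))).trans ?_
    have h0 := filter_gt_range'_perm (s := y+1) (n := n-y) (x := x) (by omega)
    refine h0.trans ?_
    rw [show y + 1 + (n - y) - (x+1) = n - x from by omega]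
  have hph : h ~ range' (y+1) (x - (y+1)) := by
    refine (hpAbig.filter (fun v => decide (v < x))).trans ?_
    have h0 := filter_lt_range'_perm (s := y+1) (n := n-y) (x := x) (by omega) (by omega)
    simpa using h0
  have hhmem : ∀ a ∈ h, y + 1 ≤ a ∧ a < x := fun a ha => by
    have := mem_of_perm_range' hph a ha; omega
  set g := h.map (fun v => v - 1) with hg
  have hpg : g ~ range' y (x - (y+1)) := by
    have h1 := hph.map (fun v => v - 1)
    rwa [map_sub_one_range'] at h1
  have hfal : Free al := hfA.sublist (List.filter_sublist)
  have hfh : Free h := hfA.sublist (List.filter_sublist)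
  have hfg : Free g := hfh.map_mono _ (fun a _ b _ hab => by omega)
  have hfB : Free B := hfree.sublist (List.filter_sublist)
  -- short counts
  have hs3 : shortCount Abig = shortCount al + (x - (y+1)) := by
    have hs4 : shortCount Abig = shortCount al + shortCount (h ++ [x]) := by
      conv_lhs => rw [hsplit2]
      apply shortCount_append_high
      intro a ha b hb
      have := mem_of_perm_range' hpal a ha
      rcases List.mem_append.mp hb with h' | h'
      · have := hhmem b h'; omega
      · simp at h'; omega
    have hs5 : shortCount (h ++ [x]) = x - (y+1) := by
      rw [shortCount_append_low h [x] (fun a ha => ⟨x, by simp, (hhmem a ha).2⟩),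
        shortCount_singleton]
      exact hph.length_eq.trans (by simp)
    rw [hs4, hs5]
  have hscal : shortCount al + x = r + 1 := by
    rw [hs1, hs2, hs3] at hsc
    omega
  refine ⟨⟨al, g, B, x⟩,
    Par_intro hfal hfg hfB hpal (by
      rw [hBlen, show y - 1 + 1 = y from by omega,
        show x - 2 - (y-1) = x - (y+1) from by omega]
      exact hpg) (by rw [hBlen]; exact hpB) (by omega) (by omega) (by omega) hscal, ?_⟩
  · show al ++ (g.map (fun v => v+1) ++ (x :: (B ++ [B.length + 1]))) = l
    have hgid : g.map (fun v => v+1) = h := by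
      rw [hg, List.map_map]
      have : ∀ a ∈ h, ((fun v => v+1) ∘ (fun v => v-1)) a = id a := by
        intro a ha
        have := hhmem a ha
        simp; omega
      rw [List.map_congr_left this, List.map_id]
    rw [hgid, hBlen, show y - 1 + 1 = y from by omega]
    conv_rhs => rw [hsplit, hsplit2]
    simp [List.append_assoc]

lemma Fm_inj {n r : ℕ} : Set.InjOn Fm (Par n r) := by
  rintro ⟨al, g, B, x⟩ hp ⟨al', g', B', x'⟩ hp' heq
  obtain ⟨hfal, hfg, hfB, hpal, hpg, hpB, hx2, hxn, ht2, hsc⟩ := hp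
  obtain ⟨hfal', hfg', hfB', hpal', hpg', hpB', hx2', hxn', ht2', hsc'⟩ := hp'
  simp only at *
  have hal := mem_of_perm_range' hpal
  have hg := mem_of_perm_range' hpg
  have hal' := mem_of_perm_range' hpal'
  have hg' := mem_of_perm_range' hpg'
  -- x = x'
  have e1 : Fm ⟨al, g, B, x⟩ = (al ++ (g ++ ((x-1) :: B))) ++ [x] := by
    simp [Fm, List.append_assoc]
  have e1' : Fm ⟨al', g', B', x'⟩ = (al' ++ (g' ++ ((x'-1) :: B'))) ++ [x'] := by
    simp [Fm, List.append_assoc]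
  have hxx : x = x' := by
    have := congrArg List.getLast? heq
    rw [e1, e1', List.getLast?_concat, List.getLast?_concat] at this
    exact Option.some.inj this
  subst hxx
  -- split at x-1
  have e2 : (al ++ g) ++ ((x-1) :: (B ++ [x])) = (al' ++ g') ++ ((x-1) :: (B' ++ [x])) := by
    have h0 : Fm ⟨al, g, B, x⟩ = (al ++ g) ++ ((x-1) :: (B ++ [x])) := by
      simp [Fm, List.append_assoc]
    have h0' : Fm ⟨al', g', B', x⟩ = (al' ++ g') ++ ((x-1) :: (B' ++ [x])) := by
      simp [Fm, List.append_assoc]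
    rw [← h0, ← h0', heq]
  have hnm : (x-1) ∉ al ++ g := by
    intro hmem
    rcases List.mem_append.mp hmem with h' | h'
    · have := hal _ h'; omega
    · have := hg _ h'; omega
  have hnm' : (x-1) ∉ al' ++ g' := by
    intro hmem
    rcases List.mem_append.mp hmem with h' | h'
    · have := hal' _ h'; omega
    · have := hg' _ h'; omega
  obtain ⟨h3, h4⟩ := append_cons_unique e2 hnm hnm'
  have hBB : B = B' := List.append_cancel_right h4
  have halal : al = al' := by
    have f1 : (al ++ g).filter (fun v => decide (x < v)) = al := by
      rw [List.filter_append, List.filter_eq_self.mpr (fun a ha => by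
          simp; exact (hal a ha).1),
        List.filter_eq_nil_iff.mpr (fun a ha => by simp; have := hg a ha; omega)]
      simp
    have f1' : (al' ++ g').filter (fun v => decide (x < v)) = al' := by
      rw [List.filter_append, List.filter_eq_self.mpr (fun a ha => by
          simp; exact (hal' a ha).1),
        List.filter_eq_nil_iff.mpr (fun a ha => by simp; have := hg' a ha; omega)]
      simp
    rw [← f1, ← f1', h3]
  have hgg : g = g' := by
    rw [halal] at h3
    exact List.append_cancel_left h3
  rw [halal, hgg, hBB]

lemma Gm_inj {n r : ℕ} : Set.InjOn Gm (Par n r) := by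
  rintro ⟨al, g, B, x⟩ hp ⟨al', g', B', x'⟩ hp' heq
  obtain ⟨hfal, hfg, hfB, hpal, hpg, hpB, hx2, hxn, ht2, hsc⟩ := hp
  obtain ⟨hfal', hfg', hfB', hpal', hpg', hpB', hx2', hxn', ht2', hsc'⟩ := hp'
  simp only at *
  have hal := mem_of_perm_range' hpal
  have hg := mem_of_perm_range' hpg
  have hB := mem_of_perm_range' hpB
  have hal' := mem_of_perm_range' hpal'
  have hg' := mem_of_perm_range' hpg'
  have hB' := mem_of_perm_range' hpB'
  set t := B.length with hht
  set t' := B'.length with hht'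
  have hgm : ∀ a ∈ g.map (fun v => v+1), t+2 ≤ a ∧ a ≤ x-1 := by
    intro a ha
    simp only [List.mem_map] at ha
    obtain ⟨a₀, h₀, rfl⟩ := ha
    have := hg a₀ h₀; omega
  have hgm' : ∀ a ∈ g'.map (fun v => v+1), t'+2 ≤ a ∧ a ≤ x'-1 := by
    intro a ha
    simp only [List.mem_map] at ha
    obtain ⟨a₀, h₀, rfl⟩ := ha
    have := hg' a₀ h₀; omega
  -- t = t'
  have htt : t = t' := by
    have e1 : Gm ⟨al, g, B, x⟩ = (al ++ (g.map (fun v => v+1) ++ (x :: B))) ++ [t+1] := by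
      simp [Gm, List.append_assoc, hht]
    have e1' : Gm ⟨al', g', B', x'⟩ =
        (al' ++ (g'.map (fun v => v+1) ++ (x' :: B'))) ++ [t'+1] := by
      simp [Gm, List.append_assoc, hht']
    have := congrArg List.getLast? heq
    rw [e1, e1', List.getLast?_concat, List.getLast?_concat] at this
    have := Option.some.inj this
    omega
  -- B = B'
  have fB : (Gm ⟨al, g, B, x⟩).filter (fun v => decide (v < t+1)) = B := by
    show (al ++ (g.map (fun v => v+1) ++ (x :: (B ++ [t + 1])))).filter _ = B
    rw [List.filter_append, List.filter_append]
    rw [List.filter_eq_nil_iff.mpr (fun a ha => by simp; have := hal a ha; omega)]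
    rw [List.filter_eq_nil_iff.mpr (fun a ha => by simp; have := hgm a ha; omega)]
    rw [List.filter_cons_of_neg (by simp; omega)]
    rw [List.filter_append, List.filter_eq_self.mpr (fun a ha => by
        simp; have := hB a ha; omega)]
    rw [List.filter_eq_nil_iff.mpr (fun a ha => by simp at ha ⊢; omega)]
    simp
  have fB' : (Gm ⟨al', g', B', x'⟩).filter (fun v => decide (v < t'+1)) = B' := by
    show (al' ++ (g'.map (fun v => v+1) ++ (x' :: (B' ++ [t' + 1])))).filter _ = B'
    rw [List.filter_append, List.filter_append]
    rw [List.filter_eq_nil_iff.mpr (fun a ha => by simp; have := hal' a ha; omega)]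
    rw [List.filter_eq_nil_iff.mpr (fun a ha => by simp; have := hgm' a ha; omega)]
    rw [List.filter_cons_of_neg (by simp; omega)]
    rw [List.filter_append, List.filter_eq_self.mpr (fun a ha => by
        simp; have := hB' a ha; omega)]
    rw [List.filter_eq_nil_iff.mpr (fun a ha => by simp at ha ⊢; omega)]
    simp
  have hBB : B = B' := by rw [← fB, ← fB', heq, htt]
  -- x = x'
  have fx : (Gm ⟨al, g, B, x⟩).filter (fun v => decide (t+1 < v)) =
      al ++ (g.map (fun v => v+1) ++ [x]) := by
    show (al ++ (g.map (fun v => v+1) ++ (x :: (B ++ [t + 1])))).filter _ = _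
    rw [List.filter_append, List.filter_append]
    rw [List.filter_eq_self.mpr (fun a ha => by simp; have := hal a ha; omega)]
    rw [List.filter_eq_self.mpr (fun a ha => by simp; have := hgm a ha; omega)]
    rw [List.filter_cons_of_pos (by simp; omega)]
    rw [List.filter_append, List.filter_eq_nil_iff.mpr (fun a ha => by
        simp; have := hB a ha; omega)]
    rw [List.filter_eq_nil_iff.mpr (fun a ha => by simp at ha ⊢; omega)]
    simp
  have fx' : (Gm ⟨al', g', B', x'⟩).filter (fun v => decide (t'+1 < v)) =
      al' ++ (g'.map (fun v => v+1) ++ [x']) := by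
    show (al' ++ (g'.map (fun v => v+1) ++ (x' :: (B' ++ [t' + 1])))).filter _ = _
    rw [List.filter_append, List.filter_append]
    rw [List.filter_eq_self.mpr (fun a ha => by simp; have := hal' a ha; omega)]
    rw [List.filter_eq_self.mpr (fun a ha => by simp; have := hgm' a ha; omega)]
    rw [List.filter_cons_of_pos (by simp; omega)]
    rw [List.filter_append, List.filter_eq_nil_iff.mpr (fun a ha => by
        simp; have := hB' a ha; omega)]
    rw [List.filter_eq_nil_iff.mpr (fun a ha => by simp at ha ⊢; omega)]
    simp
  have hfilt : al ++ (g.map (fun v => v+1) ++ [x]) = al' ++ (g'.map (fun v => v+1) ++ [x']) := by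
    rw [← fx, ← fx', heq, htt]
  have hxx : x = x' := by
    have := congrArg List.getLast? hfilt
    rw [show al ++ (g.map (fun v => v+1) ++ [x]) = (al ++ g.map (fun v => v+1)) ++ [x] by
        simp [List.append_assoc],
      show al' ++ (g'.map (fun v => v+1) ++ [x']) = (al' ++ g'.map (fun v => v+1)) ++ [x'] by
        simp [List.append_assoc],
      List.getLast?_concat, List.getLast?_concat] at this
    exact Option.some.inj this
  subst hxx
  -- al = al'
  have fa : (al ++ (g.map (fun v => v+1) ++ [x])).filter (fun v => decide (x < v)) = al := by
    rw [List.filter_append, List.filter_append]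
    rw [List.filter_eq_self.mpr (fun a ha => by simp; exact (hal a ha).1)]
    rw [List.filter_eq_nil_iff.mpr (fun a ha => by simp; have := hgm a ha; omega)]
    rw [List.filter_eq_nil_iff.mpr (fun a ha => by simp at ha ⊢; omega)]
    simp
  have fa' : (al' ++ (g'.map (fun v => v+1) ++ [x])).filter (fun v => decide (x < v)) = al' := by
    rw [List.filter_append, List.filter_append]
    rw [List.filter_eq_self.mpr (fun a ha => by simp; exact (hal' a ha).1)]
    rw [List.filter_eq_nil_iff.mpr (fun a ha => by simp; have := hgm' a ha; omega)]
    rw [List.filter_eq_nil_iff.mpr (fun a ha => by simp at ha ⊢; omega)]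
    simp
  have halal : al = al' := by rw [← fa, ← fa', hfilt]
  have hgg : g = g' := by
    have h5 : g.map (fun v => v+1) ++ [x] = g'.map (fun v => v+1) ++ [x] := by
      rw [halal] at hfilt
      exact List.append_cancel_left hfilt
    have h6 : g.map (fun v => v+1) = g'.map (fun v => v+1) := List.append_cancel_right h5
    exact List.map_injective_iff.mpr (fun a b hab => by omega) h6
  rw [halal, hgg, hBB]

/-- For `n ≥ 2` and `1 ≤ r ≤ n-1`, the number of 132-avoiding permutations of length `n`
with exactly `r` short values whose last entry is greater than `1` equals `|A(n, r-1)|`. -/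
theorem card_last_gt_one (n r : ℕ) (hn : 2 ≤ n) (hr1 : 1 ≤ r) (hr2 : r ≤ n - 1) :
    {l | l ∈ A132 n r ∧ ∃ x, l.getLast? = some x ∧ 1 < x}.ncard =
      (A132 n (r - 1)).ncard := by
  have h1 : {l | l ∈ A132 n r ∧ ∃ x, l.getLast? = some x ∧ 1 < x} = Fm '' Par n r := by
    apply Set.Subset.antisymm LHS_sub
    rintro l ⟨⟨al, g, B, x⟩, hp, rfl⟩
    exact Fm_mem hp
  have h2 : A132 n (r-1) = Gm '' Par n r := by
    apply Set.Subset.antisymm (RHS_sub hn hr1 hr2)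
    rintro l ⟨⟨al, g, B, x⟩, hp, rfl⟩
    exact Gm_mem hp
  rw [h1, h2, Set.ncard_image_of_injOn Fm_inj, Set.ncard_image_of_injOn Gm_inj]
end

section
/- For n ≥ 2 and 1 ≤ r ≤ n−1, the number of 132-avoiding permutations of length n with exactly r short values satisfies |A(n, r)| = |A(n−1, r)| + |A(n, r−1)|. -/
open List

attribute [local instance] Classical.propDecidable

/-- arithmetic characterization of containing a 132 pattern -/
def Pat132 (l : List ℕ) : Prop :=
  ∃ i j k, i < j ∧ j < k ∧ k < l.length ∧ l.getD i 0 < l.getD k 0 ∧ l.getD k 0 < l.getD j 0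

lemma contains_of_pat132 {l : List ℕ} (h : Pat132 l) : ContainsPat l [1, 3, 2] := by
  obtain ⟨i, j, k, hij, hjk, hk, h1, h2⟩ := h
  have hj : j < l.length := hjk.trans hk
  have hi : i < l.length := hij.trans hj
  have hsub : [l[i], l[j], l[k]] <+ l := by
    have := map_getElem_sublist (l := l) (is := [⟨i, hi⟩, ⟨j, hj⟩, ⟨k, hk⟩])
      (by simp [List.pairwise_cons]; omega)
    simpa using this
  rw [List.getD_eq_getElem l 0 hi, List.getD_eq_getElem l 0 hk] at h1
  rw [List.getD_eq_getElem l 0 hk, List.getD_eq_getElem l 0 hj] at h2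
  refine ⟨[l[i], l[j], l[k]], hsub, by simp, ?_⟩
  · intro a b hab hb
    simp only [List.length_cons, List.length_nil] at hb
    interval_cases b <;> interval_cases a <;>
      simp only [List.getD_cons_zero, List.getD_cons_succ] <;>
      constructor <;> intro hx <;> omega

lemma pat132_of_contains {l : List ℕ} (hnd : l.Nodup) (h : ContainsPat l [1, 3, 2]) :
    Pat132 l := by
  obtain ⟨s, hs, hlen, hiso⟩ := h
  simp only [List.length_cons, List.length_nil] at hlen
  obtain ⟨x, y, z, rfl⟩ := List.length_eq_three.1 hlen
  have h01 : x < y := by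
    have := hiso 0 1 (by omega) (by simp)
    simp only [List.getD_cons_zero, List.getD_cons_succ] at this
    exact this.2 (by norm_num)
  have h02 : x < z := by
    have := hiso 0 2 (by omega) (by simp)
    simp only [List.getD_cons_zero, List.getD_cons_succ] at this
    exact this.2 (by norm_num)
  have h12 : ¬ y < z := by
    have := hiso 1 2 (by omega) (by simp)
    simp only [List.getD_cons_zero, List.getD_cons_succ] at this
    intro hyz
    have := this.1 hyz
    norm_num at this
  have hne : y ≠ z := by
    have := hnd.sublist hs
    simp at this
    tauto
  have hzy : z < y := lt_of_le_of_ne (not_lt.1 h12) (Ne.symm hne)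
  rw [List.sublist_iff_exists_fin_orderEmbedding_get_eq] at hs
  obtain ⟨f, hf⟩ := hs
  have hmono := f.strictMono
  have e0 := hf ⟨0, by simp⟩
  have e1 := hf ⟨1, by simp⟩
  have e2 := hf ⟨2, by simp⟩
  simp only [List.get_eq_getElem] at e0 e1 e2
  refine ⟨(f ⟨0, by simp⟩).val, (f ⟨1, by simp⟩).val, (f ⟨2, by simp⟩).val, ?_, ?_,
    (f ⟨2, by simp⟩).isLt, ?_, ?_⟩
  · exact hmono (Fin.mk_lt_mk.mpr (by norm_num))
  · exact hmono (Fin.mk_lt_mk.mpr (by norm_num))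
  · rw [List.getD_eq_getElem l 0 (f _).isLt, List.getD_eq_getElem l 0 (f _).isLt, ← e0, ← e2]
    simpa using h02
  · rw [List.getD_eq_getElem l 0 (f _).isLt, List.getD_eq_getElem l 0 (f _).isLt, ← e1, ← e2]
    simpa using hzy

lemma avoids_iff_not_pat132 {l : List ℕ} (hnd : l.Nodup) :
    AvoidsPat l [1, 3, 2] ↔ ¬ Pat132 l := by
  constructor
  · exact fun h hp => h (contains_of_pat132 hp)
  · exact fun h hc => h (pat132_of_contains hnd hc)

lemma pat132_sublist {s l : List ℕ} (hs : s <+ l) (h : Pat132 s) : Pat132 l := by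
  obtain ⟨i, j, k, hij, hjk, hk, h1, h2⟩ := h
  have hj : j < s.length := hjk.trans hk
  have hi : i < s.length := hij.trans hj
  rw [List.sublist_iff_exists_fin_orderEmbedding_get_eq] at hs
  obtain ⟨f, hf⟩ := hs
  have hmono := f.strictMono
  have e0 := hf ⟨i, hi⟩
  have e1 := hf ⟨j, hj⟩
  have e2 := hf ⟨k, hk⟩
  simp only [List.get_eq_getElem] at e0 e1 e2
  refine ⟨(f ⟨i, hi⟩).val, (f ⟨j, hj⟩).val, (f ⟨k, hk⟩).val,
    hmono (Fin.mk_lt_mk.mpr hij), hmono (Fin.mk_lt_mk.mpr hjk), (f _).isLt, ?_, ?_⟩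
  · rw [List.getD_eq_getElem l 0 (f _).isLt, List.getD_eq_getElem l 0 (f _).isLt, ← e0, ← e2]
    rwa [List.getD_eq_getElem s 0 hi, List.getD_eq_getElem s 0 hk] at h1
  · rw [List.getD_eq_getElem l 0 (f _).isLt, List.getD_eq_getElem l 0 (f _).isLt, ← e1, ← e2]
    rwa [List.getD_eq_getElem s 0 hk, List.getD_eq_getElem s 0 hj] at h2

section Glue

variable (A B : List ℕ) (m : ℕ)

lemma getD_mid : (A ++ m :: B).getD A.length 0 = m := by
  rw [List.getD_append_right _ _ _ _ le_rfl]
  simp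

lemma getD_right {i : ℕ} : (A ++ m :: B).getD (A.length + 1 + i) 0 = B.getD i 0 := by
  rw [List.getD_append_right _ _ _ _ (by omega)]
  have : A.length + 1 + i - A.length = i + 1 := by omega
  rw [this, List.getD_cons_succ]

lemma length_mid : (A ++ m :: B).length = A.length + 1 + B.length := by
  simp; omega

lemma mem_of_getD {l : List ℕ} {i : ℕ} (h : i < l.length) : l.getD i 0 ∈ l := by
  rw [List.getD_eq_getElem l 0 h]; exact List.getElem_mem h

lemma pat132_glue (hA : ∀ x ∈ A, x < m) (hB : ∀ y ∈ B, y < m)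
    (hAB : ∀ x ∈ A, ∀ y ∈ B, y < x)
    (hA2 : ¬ Pat132 A) (hB2 : ¬ Pat132 B) : ¬ Pat132 (A ++ m :: B) := by
  rintro ⟨i, j, k, hij, hjk, hk, h1, h2⟩
  rw [length_mid] at hk
  set M := A ++ m :: B with hM
  have hgA : ∀ t, t < A.length → M.getD t 0 = A.getD t 0 := fun t ht =>
    List.getD_append _ _ _ _ ht
  -- case on position of k
  rcases lt_trichotomy k A.length with hkA | hkA | hkA
  · -- all inside A
    exact hA2 ⟨i, j, k, hij, hjk, hkA, by
      rwa [hgA i (by omega), hgA k (by omega)] at h1, by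
      rwa [hgA j (by omega), hgA k (by omega)] at h2⟩
  · -- M_k = m, but M_k < M_j, while M_j < m
    have hk' : M.getD k 0 = m := by rw [hkA]; exact getD_mid A B m
    have hj' : M.getD j 0 ∈ A := by
      rw [hgA j (by omega)]; exact mem_of_getD (by omega)
    exact absurd h2 (by rw [hk']; exact not_lt.2 (le_of_lt (hA _ hj')))
  · -- M_k ∈ B
    have hkB : M.getD k 0 ∈ B := by
      obtain ⟨t, ht⟩ : ∃ t, k = A.length + 1 + t := ⟨k - A.length - 1, by omega⟩
      rw [ht, getD_right]
      exact mem_of_getD (by omega)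
    rcases lt_trichotomy j A.length with hjA | hjA | hjA
    · -- j in A, i in A : M_i ∈ A but M_i < M_k ∈ B, contradiction
      have hiA : M.getD i 0 ∈ A := by
        rw [hgA i (by omega)]; exact mem_of_getD (by omega)
      exact absurd h1 (not_lt.2 (le_of_lt (hAB _ hiA _ hkB)))
    · -- j is position of m, i in A
      have hiA : M.getD i 0 ∈ A := by
        rw [hgA i (by omega)]; exact mem_of_getD (by omega)
      exact absurd h1 (not_lt.2 (le_of_lt (hAB _ hiA _ hkB)))
    · -- j in B
      rcases lt_trichotomy i A.length with hiA | hiA | hiA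
      · have hiA' : M.getD i 0 ∈ A := by
          rw [hgA i (by omega)]; exact mem_of_getD (by omega)
        exact absurd h1 (not_lt.2 (le_of_lt (hAB _ hiA' _ hkB)))
      · have hi' : M.getD i 0 = m := by rw [hiA]; exact getD_mid A B m
        exact absurd h1 (by rw [hi']; exact not_lt.2 (le_of_lt (hB _ hkB)))
      · -- all in B
        obtain ⟨ti, hti⟩ : ∃ t, i = A.length + 1 + t := ⟨i - A.length - 1, by omega⟩
        obtain ⟨tj, htj⟩ : ∃ t, j = A.length + 1 + t := ⟨j - A.length - 1, by omega⟩
        obtain ⟨tk, htk⟩ : ∃ t, k = A.length + 1 + t := ⟨k - A.length - 1, by omega⟩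
        subst hti htj htk
        rw [getD_right, getD_right] at h1
        rw [getD_right, getD_right] at h2
        exact hB2 ⟨ti, tj, tk, by omega, by omega, by omega, h1, h2⟩

lemma pat132_cross (h : ¬ Pat132 (A ++ m :: B)) (hB : ∀ y ∈ B, y < m)
    (hnd : (A ++ m :: B).Nodup) : ∀ x ∈ A, ∀ y ∈ B, y < x := by
  intro x hx y hy
  by_contra hxy
  push_neg at hxy
  have hne : x ≠ y := by
    rw [List.nodup_append] at hnd
    exact fun he => hnd.2.2 x hx y (List.mem_cons_of_mem m hy) he
  have hxy' : x < y := lt_of_le_of_ne hxy hne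
  obtain ⟨i, hi, hix⟩ := List.mem_iff_getElem.1 hx
  obtain ⟨t, ht, hty⟩ := List.mem_iff_getElem.1 hy
  refine h ⟨i, A.length, A.length + 1 + t, by omega, by omega, by rw [length_mid]; omega, ?_, ?_⟩
  · rw [List.getD_append _ _ _ _ hi, getD_right, List.getD_eq_getElem A 0 hi,
      List.getD_eq_getElem B 0 ht, hix, hty]
    exact hxy'
  · rw [getD_mid, getD_right, List.getD_eq_getElem B 0 ht, hty]
    exact hB y hy

end Glue

section Short

lemma shortCount_eq_card (l : List ℕ) :
    shortCount l = ((Finset.range l.length).filter fun i => ¬ IsRLMax l i).card := by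
  rw [shortCount, ← Set.ncard_coe_finset]
  congr 1
  ext i
  simp [Finset.mem_filter, Finset.mem_range]

lemma shortCount_append (A B : List ℕ) (m : ℕ) (hA : ∀ x ∈ A, x < m) (hB : ∀ y ∈ B, y < m) :
    shortCount (A ++ m :: B) = A.length + shortCount B := by
  classical
  set M := A ++ m :: B with hM
  have hlen : M.length = A.length + 1 + B.length := length_mid A B m
  have s1 : ∀ i, i < A.length → ¬ IsRLMax M i := by
    intro i hi hRL
    have := hRL A.length (by omega) (by omega)
    rw [getD_mid, List.getD_append _ _ _ _ hi] at this
    exact absurd this (not_lt.2 (le_of_lt (hA _ (mem_of_getD (l := A) hi))))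
  have s2 : IsRLMax M A.length := by
    intro j hj hjl
    obtain ⟨t, rfl⟩ : ∃ t, j = A.length + 1 + t := ⟨j - A.length - 1, by omega⟩
    rw [getD_mid, getD_right]
    exact hB _ (mem_of_getD (l := B) (by omega))
  have s3 : ∀ i, i < B.length → (IsRLMax M (A.length + 1 + i) ↔ IsRLMax B i) := by
    intro i hi
    constructor
    · intro h j hj hjB
      have := h (A.length + 1 + j) (by omega) (by omega)
      rwa [getD_right, getD_right] at this
    · intro h j hj hjl
      obtain ⟨t, rfl⟩ : ∃ t, j = A.length + 1 + t := ⟨j - A.length - 1, by omega⟩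
      rw [getD_right, getD_right]
      exact h t (by omega) (by omega)
  rw [shortCount_eq_card, shortCount_eq_card]
  have hset : (Finset.range M.length).filter (fun i => ¬ IsRLMax M i) =
      Finset.range A.length ∪
        ((Finset.range B.length).filter (fun i => ¬ IsRLMax B i)).image
          (fun i => A.length + 1 + i) := by
    ext i
    simp only [Finset.mem_filter, Finset.mem_range, Finset.mem_union, Finset.mem_image]
    constructor
    · rintro ⟨hil, hiRL⟩
      rcases lt_trichotomy i A.length with h' | h' | h'
      · exact Or.inl h'
      · exact absurd (h' ▸ s2) hiRL
      · obtain ⟨t, rfl⟩ : ∃ t, i = A.length + 1 + t := ⟨i - A.length - 1, by omega⟩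
        have ht : t < B.length := by omega
        exact Or.inr ⟨t, ⟨ht, fun hc => hiRL ((s3 t ht).2 hc)⟩, rfl⟩
    · rintro (h' | ⟨t, ⟨ht, htRL⟩, rfl⟩)
      · exact ⟨by omega, s1 i h'⟩
      · exact ⟨by omega, fun hc => htRL ((s3 t ht).1 hc)⟩
  rw [hset, Finset.card_union_of_disjoint, Finset.card_range,
    Finset.card_image_of_injective _ (fun a b h => by omega)]
  · rw [Finset.disjoint_left]
    intro i hi hi2
    simp only [Finset.mem_range] at hi
    simp only [Finset.mem_image, Finset.mem_filter, Finset.mem_range] at hi2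
    obtain ⟨t, _, rfl⟩ := hi2
    omega

end Short

section PermStruct

lemma pat132_map_add (b : ℕ) (l : List ℕ) :
    Pat132 (l.map (fun x => x + b)) ↔ Pat132 l := by
  have hg : ∀ i, i < l.length → (l.map (fun x => x + b)).getD i 0 = l.getD i 0 + b := by
    intro i hi
    rw [List.getD_eq_getElem _ 0 (by simpa using hi), List.getElem_map,
      List.getD_eq_getElem _ 0 hi]
  constructor
  · rintro ⟨i, j, k, hij, hjk, hk, h1, h2⟩
    rw [List.length_map] at hk
    rw [hg i (by omega), hg k (by omega)] at h1
    rw [hg j (by omega), hg k (by omega)] at h2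
    exact ⟨i, j, k, hij, hjk, hk, by omega, by omega⟩
  · rintro ⟨i, j, k, hij, hjk, hk, h1, h2⟩
    refine ⟨i, j, k, hij, hjk, by simpa using hk, ?_, ?_⟩
    · rw [hg i (by omega), hg k (by omega)]; omega
    · rw [hg j (by omega), hg k (by omega)]; omega

lemma map_add_perm {a b : ℕ} {L : List ℕ} (hL : L ~ List.range' 1 a) :
    L.map (fun x => x + b) ~ List.range' (b + 1) a := by
  calc L.map (fun x => x + b) = L.map (fun x => b + x) :=
        List.map_congr_left (fun x _ => by omega)
    _ ~ (List.range' 1 a).map (fun x => b + x) := hL.map _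
    _ = List.range' (b + 1) a := by rw [map_add_range', Nat.add_comm b 1]

lemma range'_split_s8 (a b : ℕ) :
    List.range' 1 (a + b + 1) = (List.range' 1 b ++ List.range' (b + 1) a) ++ [a + b + 1] := by
  have h1 := List.range'_append (s := 1) (m := b) (n := a) (step := 1)
  rw [show 1 + 1 * b = b + 1 by omega] at h1
  have h2 := List.range'_append (s := 1) (m := a + b) (n := 1) (step := 1)
  rw [range'_one] at h2
  rw [h1, ← h2, Nat.add_comm b a, one_mul, Nat.add_comm 1 (a + b)]

lemma compose_perm {a b : ℕ} {L R : List ℕ} (hL : L ~ List.range' 1 a)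
    (hR : R ~ List.range' 1 b) :
    (L.map (fun x => x + b) ++ (a + b + 1) :: R) ~ List.range' 1 (a + b + 1) := by
  calc L.map (fun x => x + b) ++ (a + b + 1) :: R
      ~ List.range' (b + 1) a ++ (a + b + 1) :: List.range' 1 b :=
        (map_add_perm hL).append (hR.cons _)
    _ ~ (a + b + 1) :: (List.range' (b + 1) a ++ List.range' 1 b) := perm_middle
    _ ~ (a + b + 1) :: (List.range' 1 b ++ List.range' (b + 1) a) :=
        (perm_append_comm).cons _
    _ ~ (List.range' 1 b ++ List.range' (b + 1) a) ++ [a + b + 1] := by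
        simpa using
          (perm_middle (a := a + b + 1) (l₁ := List.range' 1 b ++ List.range' (b + 1) a)
            (l₂ := [])).symm
    _ = List.range' 1 (a + b + 1) := (range'_split_s8 a b).symm

lemma indexOf_concat {A B : List ℕ} {v : ℕ} (h : v ∉ A) :
    (A ++ v :: B).idxOf v = A.length := by
  rw [List.idxOf_append_of_notMem h, List.idxOf_cons_self]
  omega

lemma compose_full {a b : ℕ} {L R : List ℕ} (hL : L ~ List.range' 1 a) (hLav : ¬ Pat132 L)
    (hR : R ~ List.range' 1 b) (hRav : ¬ Pat132 R) :
    (L.map (fun x => x + b) ++ (a + b + 1) :: R) ~ List.range' 1 (a + b + 1) ∧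
    ¬ Pat132 (L.map (fun x => x + b) ++ (a + b + 1) :: R) ∧
    shortCount (L.map (fun x => x + b) ++ (a + b + 1) :: R) = a + shortCount R ∧
    (L.map (fun x => x + b) ++ (a + b + 1) :: R).idxOf (a + b + 1) = a := by
  have hLm : ∀ x ∈ L, 1 ≤ x ∧ x ≤ a := fun x hx => by
    have := (hL.mem_iff).1 hx
    rw [mem_range'_1] at this
    omega
  have hRm : ∀ y ∈ R, 1 ≤ y ∧ y ≤ b := fun y hy => by
    have := (hR.mem_iff).1 hy
    rw [mem_range'_1] at this
    omega
  have hA : ∀ x ∈ L.map (fun x => x + b), x < a + b + 1 := by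
    rintro x hx
    obtain ⟨y, hy, rfl⟩ := List.mem_map.1 hx
    have := hLm y hy
    omega
  have hB : ∀ y ∈ R, y < a + b + 1 := fun y hy => by have := hRm y hy; omega
  have hAB : ∀ x ∈ L.map (fun x => x + b), ∀ y ∈ R, y < x := by
    rintro x hx y hy
    obtain ⟨z, hz, rfl⟩ := List.mem_map.1 hx
    have := hLm z hz
    have := hRm y hy
    omega
  have hLlen : L.length = a := by have := hL.length_eq; simpa using this
  refine ⟨compose_perm hL hR, ?_, ?_, ?_⟩
  · exact pat132_glue _ _ _ hA hB hAB
      (fun h => hLav ((pat132_map_add b L).1 h)) hRav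
  · rw [shortCount_append _ _ _ hA hB, List.length_map, hLlen]
  · rw [indexOf_concat (B := R) (fun h => absurd (hA _ h) (lt_irrefl _)), List.length_map, hLlen]

lemma decomp_full {n a : ℕ} {l : List ℕ} (hn : 1 ≤ n) (hl : l ~ List.range' 1 n)
    (hav : ¬ Pat132 l) (ha : l.idxOf n = a) :
    a < n ∧ shortCount l = a + shortCount (l.drop (a + 1)) ∧
    ¬ Pat132 (l.drop (a + 1)) ∧
    (l.drop (a + 1)) ~ List.range' 1 (n - 1 - a) ∧
    ((l.take a).map (fun x => x - (n - 1 - a))) ~ List.range' 1 a ∧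
    ¬ Pat132 ((l.take a).map (fun x => x - (n - 1 - a))) ∧
    ((l.take a).map (fun x => x - (n - 1 - a))).map (fun x => x + (n - 1 - a)) = l.take a ∧
    l.take a ++ n :: l.drop (a + 1) = l := by
  have hlen : l.length = n := by have := hl.length_eq; simpa using this
  have hnd : l.Nodup := (hl.nodup_iff).2 (nodup_range' (s := 1) (n := n))
  have hnl : n ∈ l := (hl.mem_iff).2 (mem_range'_1.2 ⟨hn, by omega⟩)
  have haln : a < n := by
    rw [← hlen, ← ha]
    exact idxOf_lt_length_iff.2 hnl
  have hgetd : l.getD a 0 = n := by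
    have h1 : l.getD (l.idxOf n) 0 = n := by
      rw [List.getD_eq_getElem l 0 (by rw [ha]; omega)]
      exact List.getElem_idxOf _
    rwa [ha] at h1
  have hgetn : l[a]'(by omega) = n := by
    rw [← List.getD_eq_getElem l 0 (by omega)]
    exact hgetd
  set b := n - 1 - a with hb
  set P := l.take a with hP
  set R := l.drop (a + 1) with hR
  have hPlen : P.length = a := by rw [hP, List.length_take]; omega
  have hRlen : R.length = n - a - 1 := by rw [hR, List.length_drop]; omega
  have hsplit : P ++ n :: R = l := by
    rw [hP, hR, ← hgetn, List.getElem_cons_drop, take_append_drop]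
  have hmem : ∀ x ∈ l, 1 ≤ x ∧ x ≤ n := fun x hx => by
    have := (hl.mem_iff).1 hx
    rw [mem_range'_1] at this
    omega
  have hndM : (P ++ n :: R).Nodup := by rw [hsplit]; exact hnd
  have hnP : n ∉ P := by
    rw [List.nodup_append] at hndM
    exact fun h => hndM.2.2 n h n List.mem_cons_self rfl
  have hnR : n ∉ R := by
    rw [List.nodup_append, List.nodup_cons] at hndM
    exact hndM.2.1.1
  have hPsub : ∀ x ∈ P, x ∈ l := fun x hx => (List.take_sublist a l).subset hx
  have hRsub : ∀ x ∈ R, x ∈ l := fun x hx => (List.drop_sublist (a + 1) l).subset hx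
  have hubP : ∀ x ∈ P, x < n :=
    fun x hx => lt_of_le_of_ne (hmem x (hPsub x hx)).2 (fun h => hnP (h ▸ hx))
  have hubR : ∀ y ∈ R, y < n :=
    fun y hy => lt_of_le_of_ne (hmem y (hRsub y hy)).2 (fun h => hnR (h ▸ hy))
  have havM : ¬ Pat132 (P ++ n :: R) := by rw [hsplit]; exact hav
  have hcross : ∀ x ∈ P, ∀ y ∈ R, y < x := pat132_cross P R n havM hubR hndM
  have havP : ¬ Pat132 P := fun h => hav (pat132_sublist (List.take_sublist a l) h)
  have havR : ¬ Pat132 R := fun h => hav (pat132_sublist (List.drop_sublist (a + 1) l) h)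
  have hndP : P.Nodup := (List.take_sublist a l).nodup hnd
  have hndR : R.Nodup := (List.drop_sublist (a + 1) l).nodup hnd
  -- every element of R is at most b
  have hRub : ∀ y ∈ R, y ≤ b := by
    intro y hy
    by_contra hyb
    push_neg at hyb
    -- the a+1 distinct elements of n :: P all lie in (y, n]
    have hCnd : (n :: P).Nodup := List.nodup_cons.2 ⟨hnP, hndP⟩
    have hCsub : (n :: P) ⊆ List.range' (y + 1) (n - y) := by
      intro z hz
      rw [mem_range'_1]
      rcases List.mem_cons.1 hz with rfl | hz'
      · have := hubR y hy
        omega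
      · have h1 := hcross z hz' y hy
        have h2 := (hmem z (hPsub z hz')).2
        omega
    have hsp := (List.subperm_of_subset hCnd hCsub).length_le
    rw [List.length_cons, hPlen, length_range'] at hsp
    have := hubR y hy
    omega
  have hRperm : R ~ List.range' 1 b := by
    have hsub : R ⊆ List.range' 1 b := by
      intro y hy
      rw [mem_range'_1]
      exact ⟨(hmem y (hRsub y hy)).1, by have := hRub y hy; omega⟩
    refine (List.subperm_of_subset hndR hsub).perm_of_length_le ?_
    rw [length_range', hRlen]
    omega
  -- P is a permutation of the top block range' (b+1) a
  have hPperm : P ~ List.range' (b + 1) a := by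
    have hnab : n = a + b + 1 := by omega
    have h1 : P ++ n :: R ~ List.range' 1 n := by rw [hsplit]; exact hl
    have h2 : List.range' (b + 1) a ++ n :: R ~ List.range' 1 n := by
      have := compose_perm (a := a) (b := b) (List.Perm.refl _) hRperm
      rw [show (List.range' 1 a).map (fun x => x + b) = List.range' (b + 1) a from by
        rw [show (fun x : ℕ => x + b) = (fun x : ℕ => b + x) by funext x; omega,
          map_add_range', Nat.add_comm b 1], ← hnab] at this
      exact this
    have h3 : P ++ n :: R ~ List.range' (b + 1) a ++ n :: R := h1.trans h2.symm
    exact (perm_append_right_iff (n :: R)).1 h3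
  have hPlb : ∀ x ∈ P, b + 1 ≤ x := by
    intro x hx
    have := (hPperm.mem_iff).1 hx
    rw [mem_range'_1] at this
    exact this.1
  have hmapid : (P.map (fun x => x - b)).map (fun x => x + b) = P := by
    rw [List.map_map]
    have : ∀ x ∈ P, ((fun x => x + b) ∘ (fun x => x - b)) x = id x := by
      intro x hx
      have := hPlb x hx
      simp only [Function.comp_apply, id_eq]
      omega
    rw [List.map_congr_left this, List.map_id]
  have hLperm : P.map (fun x => x - b) ~ List.range' 1 a := by
    have h1 : P.map (fun x => x - b) ~ (List.range' (b + 1) a).map (fun x => x - b) :=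
      hPperm.map _
    have h2 : (List.range' (b + 1) a).map (fun x => x - b) = List.range' 1 a := by
      rw [show List.range' (b + 1) a = (List.range' 1 a).map (fun x => b + x) from by
        rw [map_add_range', Nat.add_comm b 1], List.map_map]
      have : ∀ x ∈ List.range' 1 a, ((fun x => x - b) ∘ (fun x => b + x)) x = id x := by
        intro x hx
        simp only [Function.comp_apply, id_eq]
        omega
      rw [List.map_congr_left this, List.map_id]
    rwa [h2] at h1
  have havL : ¬ Pat132 (P.map (fun x => x - b)) := by
    intro h
    have := (pat132_map_add b (P.map (fun x => x - b))).2 h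
    rw [hmapid] at this
    exact havP this
  have hshort : shortCount l = a + shortCount R := by
    rw [← hsplit, shortCount_append P R n hubP hubR, hPlen]
  exact ⟨haln, hshort, havR, hRperm, hLperm, havL, hmapid, hsplit⟩

end PermStruct

section Count

noncomputable def AvF (n : ℕ) : Finset (List ℕ) :=
  ((List.range' 1 n).permutations.toFinset).filter (fun l => ¬ Pat132 l)

noncomputable def AF (n k : ℕ) : Finset (List ℕ) :=
  (AvF n).filter (fun l => shortCount l = k)

lemma mem_AvF {n : ℕ} {l : List ℕ} : l ∈ AvF n ↔ l ~ List.range' 1 n ∧ ¬ Pat132 l := by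
  rw [AvF, Finset.mem_filter, List.mem_toFinset, List.mem_permutations]

lemma mem_AF {n k : ℕ} {l : List ℕ} :
    l ∈ AF n k ↔ (l ~ List.range' 1 n ∧ ¬ Pat132 l) ∧ shortCount l = k := by
  rw [AF, Finset.mem_filter, mem_AvF]

lemma A132_eq (n k : ℕ) : A132 n k = ↑(AF n k) := by
  ext l
  constructor
  · rintro ⟨h1, h2, h3⟩
    have h1' : l ~ List.range' 1 n := h1
    have hnd : l.Nodup := (h1'.nodup_iff).2 (nodup_range' (s := 1) (n := n))
    exact Finset.mem_coe.2 (mem_AF.2 ⟨⟨h1', (avoids_iff_not_pat132 hnd).1 h2⟩, h3⟩)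
  · intro h
    obtain ⟨⟨h1, h2⟩, h3⟩ := mem_AF.1 (Finset.mem_coe.1 h)
    have hnd : l.Nodup := (h1.nodup_iff).2 (nodup_range' (s := 1) (n := n))
    exact ⟨h1, (avoids_iff_not_pat132 hnd).2 h2, h3⟩

noncomputable def cC (n k : ℕ) : ℕ := (AF n k).card

noncomputable def catC (n : ℕ) : ℕ := (AvF n).card

lemma AF_fiber_card (n k a : ℕ) (hn : 1 ≤ n) (ha : a < n) :
    ((AF n k).filter (fun l => l.idxOf n = a)).card =
      if a ≤ k then catC a * cC (n - 1 - a) (k - a) else 0 := by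
  classical
  set b := n - 1 - a with hb
  have hnab : n = a + b + 1 := by omega
  by_cases hak : a ≤ k
  · rw [if_pos hak, catC, cC, ← Finset.card_product]
    refine (Finset.card_bij' (fun l _ => ((l.take a).map (fun x => x - b), l.drop (a + 1)))
      (fun p _ => p.1.map (fun x => x + b) ++ n :: p.2) ?_ ?_ ?_ ?_).symm.symm
    · -- forward membership
      intro l hl
      rw [Finset.mem_filter, mem_AF] at hl
      obtain ⟨⟨⟨hperm, hav⟩, hsc⟩, hidx⟩ := hl
      obtain ⟨h1, h2, h3, h4, h5, h6, h7, h8⟩ := decomp_full hn hperm hav hidx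
      rw [Finset.mem_product, mem_AvF, mem_AF]
      exact ⟨⟨h5, h6⟩, ⟨h4, h3⟩, show shortCount (l.drop (a + 1)) = k - a by omega⟩
    · -- backward membership
      intro p hp
      rw [Finset.mem_product, mem_AvF, mem_AF] at hp
      obtain ⟨⟨hL, hLav⟩, ⟨hR, hRav⟩, hRsc⟩ := hp
      obtain ⟨c1, c2, c3, c4⟩ := compose_full hL hLav hR hRav
      rw [← hnab] at c1 c2 c3 c4
      rw [Finset.mem_filter, mem_AF]
      exact ⟨⟨⟨c1, c2⟩, by omega⟩, c4⟩
    · -- left inverse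
      intro l hl
      dsimp only
      rw [Finset.mem_filter, mem_AF] at hl
      obtain ⟨⟨⟨hperm, hav⟩, hsc⟩, hidx⟩ := hl
      obtain ⟨h1, h2, h3, h4, h5, h6, h7, h8⟩ := decomp_full hn hperm hav hidx
      rw [h7, h8]
    · -- right inverse
      intro p hp
      rw [Finset.mem_product, mem_AvF, mem_AF] at hp
      obtain ⟨⟨hL, hLav⟩, ⟨hR, hRav⟩, hRsc⟩ := hp
      have hLlen : (p.1.map (fun x => x + b)).length = a := by
        rw [List.length_map]
        have := hL.length_eq
        simpa using this
      have htake : (p.1.map (fun x => x + b) ++ n :: p.2).take a = p.1.map (fun x => x + b) := by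
        rw [← hLlen, List.take_left]
      have hdrop : (p.1.map (fun x => x + b) ++ n :: p.2).drop (a + 1) = p.2 := by
        rw [show p.1.map (fun x => x + b) ++ n :: p.2
            = (p.1.map (fun x => x + b) ++ [n]) ++ p.2 by simp,
          show a + 1 = (p.1.map (fun x => x + b) ++ [n]).length by simp [hLlen],
          List.drop_left]
      rw [htake, hdrop, List.map_map]
      have hid : ∀ x ∈ p.1, ((fun x => x - b) ∘ (fun x => x + b)) x = id x := by
        intro x hx
        simp only [Function.comp_apply, id_eq]
        omega
      rw [List.map_congr_left hid, List.map_id]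
  · rw [if_neg hak]
    rw [Finset.card_eq_zero]
    apply Finset.eq_empty_of_forall_notMem
    intro l hl
    rw [Finset.mem_filter, mem_AF] at hl
    obtain ⟨⟨⟨hperm, hav⟩, hsc⟩, hidx⟩ := hl
    obtain ⟨h1, h2, _⟩ := decomp_full hn hperm hav hidx
    omega

lemma AvF_fiber_card (n a : ℕ) (hn : 1 ≤ n) (ha : a < n) :
    ((AvF n).filter (fun l => l.idxOf n = a)).card = catC a * catC (n - 1 - a) := by
  classical
  set b := n - 1 - a with hb
  have hnab : n = a + b + 1 := by omega
  rw [catC, catC, ← Finset.card_product]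
  refine (Finset.card_bij' (fun l _ => ((l.take a).map (fun x => x - b), l.drop (a + 1)))
    (fun p _ => p.1.map (fun x => x + b) ++ n :: p.2) ?_ ?_ ?_ ?_).symm.symm
  · intro l hl
    rw [Finset.mem_filter, mem_AvF] at hl
    obtain ⟨⟨hperm, hav⟩, hidx⟩ := hl
    obtain ⟨h1, h2, h3, h4, h5, h6, h7, h8⟩ := decomp_full hn hperm hav hidx
    rw [Finset.mem_product, mem_AvF, mem_AvF]
    exact ⟨⟨h5, h6⟩, ⟨h4, h3⟩⟩
  · intro p hp
    rw [Finset.mem_product, mem_AvF, mem_AvF] at hp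
    obtain ⟨⟨hL, hLav⟩, ⟨hR, hRav⟩⟩ := hp
    obtain ⟨c1, c2, c3, c4⟩ := compose_full hL hLav hR hRav
    rw [← hnab] at c1 c2 c3 c4
    rw [Finset.mem_filter, mem_AvF]
    exact ⟨⟨c1, c2⟩, c4⟩
  · intro l hl
    dsimp only
    rw [Finset.mem_filter, mem_AvF] at hl
    obtain ⟨⟨hperm, hav⟩, hidx⟩ := hl
    obtain ⟨h1, h2, h3, h4, h5, h6, h7, h8⟩ := decomp_full hn hperm hav hidx
    rw [h7, h8]
  · intro p hp
    rw [Finset.mem_product, mem_AvF, mem_AvF] at hp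
    obtain ⟨⟨hL, hLav⟩, ⟨hR, hRav⟩⟩ := hp
    have hLlen : (p.1.map (fun x => x + b)).length = a := by
      rw [List.length_map]
      have := hL.length_eq
      simpa using this
    have htake : (p.1.map (fun x => x + b) ++ n :: p.2).take a = p.1.map (fun x => x + b) := by
      rw [← hLlen, List.take_left]
    have hdrop : (p.1.map (fun x => x + b) ++ n :: p.2).drop (a + 1) = p.2 := by
      rw [show p.1.map (fun x => x + b) ++ n :: p.2
          = (p.1.map (fun x => x + b) ++ [n]) ++ p.2 by simp,
        show a + 1 = (p.1.map (fun x => x + b) ++ [n]).length by simp [hLlen],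
        List.drop_left]
    rw [htake, hdrop, List.map_map]
    have hid : ∀ x ∈ p.1, ((fun x => x - b) ∘ (fun x => x + b)) x = id x := by
      intro x hx
      simp only [Function.comp_apply, id_eq]
      omega
    rw [List.map_congr_left hid, List.map_id]

lemma indexOf_mem_range {n : ℕ} {l : List ℕ} (hn : 1 ≤ n) (hperm : l ~ List.range' 1 n) :
    l.idxOf n ∈ Finset.range n := by
  rw [Finset.mem_range]
  have hlen : l.length = n := by have := hperm.length_eq; simpa using this
  have : n ∈ l := (hperm.mem_iff).2 (mem_range'_1.2 ⟨hn, by omega⟩)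
  have h2 := List.idxOf_lt_length_iff.2 this
  omega

lemma cC_sum (n k : ℕ) (hn : 1 ≤ n) :
    cC n k = ∑ a ∈ Finset.range n,
      if a ≤ k then catC a * cC (n - 1 - a) (k - a) else 0 := by
  classical
  rw [cC, Finset.card_eq_sum_card_fiberwise (f := fun l => l.idxOf n)
    (t := Finset.range n) (fun l hl => indexOf_mem_range hn (mem_AF.1 hl).1.1)]
  exact Finset.sum_congr rfl fun a ha => AF_fiber_card n k a hn (Finset.mem_range.1 ha)

lemma catC_sum (n : ℕ) (hn : 1 ≤ n) :
    catC n = ∑ a ∈ Finset.range n, catC a * catC (n - 1 - a) := by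
  classical
  rw [catC, Finset.card_eq_sum_card_fiberwise (f := fun l => l.idxOf n)
    (t := Finset.range n) (fun l hl => indexOf_mem_range hn (mem_AvF.1 hl).1)]
  exact Finset.sum_congr rfl fun a ha => AvF_fiber_card n a hn (Finset.mem_range.1 ha)

end Count

section Base

lemma shortCount_le {l : List ℕ} (h : 1 ≤ l.length) : shortCount l ≤ l.length - 1 := by
  rw [shortCount_eq_card]
  have hsub : (Finset.range l.length).filter (fun i => ¬ IsRLMax l i) ⊆
      Finset.range (l.length - 1) := by
    intro i hi
    rw [Finset.mem_filter, Finset.mem_range] at hi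
    rw [Finset.mem_range]
    rcases Nat.lt_or_ge i (l.length - 1) with h' | h'
    · exact h'
    · exfalso
      exact hi.2 (fun j hj hjl => absurd hjl (by omega))
  calc ((Finset.range l.length).filter (fun i => ¬ IsRLMax l i)).card
      ≤ (Finset.range (l.length - 1)).card := Finset.card_le_card hsub
    _ = l.length - 1 := Finset.card_range _

lemma cC_ge (m k : ℕ) (hm : 1 ≤ m) (hk : m ≤ k) : cC m k = 0 := by
  rw [cC, Finset.card_eq_zero]
  apply Finset.eq_empty_of_forall_notMem
  intro l hl
  obtain ⟨⟨hperm, _⟩, hsc⟩ := mem_AF.1 hl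
  have hlen : l.length = m := by simpa using hperm.length_eq
  have := shortCount_le (l := l) (by omega)
  omega

lemma cC_zero (m : ℕ) : cC m 0 = 1 := by
  classical
  rw [cC, Finset.card_eq_one]
  refine ⟨(List.range' 1 m).reverse, ?_⟩
  have hpair : List.Pairwise (fun x y => y < x) (List.range' 1 m).reverse := by
    rw [List.pairwise_reverse]
    exact List.pairwise_lt_range' (s := 1) (n := m)
  have hgt := List.pairwise_iff_getElem.1 hpair
  have hlenrev : (List.range' 1 m).reverse.length = m := by simp
  rw [Finset.eq_singleton_iff_unique_mem]
  constructor
  · rw [mem_AF]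
    refine ⟨⟨(List.range' 1 m).reverse_perm, ?_⟩, ?_⟩
    · rintro ⟨i, j, k, hij, hjk, hk, h1, h2⟩
      have e1 := hgt i k (by omega) hk (by omega)
      rw [List.getD_eq_getElem _ 0 (by omega), List.getD_eq_getElem _ 0 hk] at h1
      omega
    · rw [shortCount_eq_card, Finset.card_eq_zero, Finset.filter_eq_empty_iff]
      intro i hi
      rw [Finset.mem_range] at hi
      rw [not_not]
      intro j hj hjl
      rw [List.getD_eq_getElem _ 0 hjl, List.getD_eq_getElem _ 0 hi]
      exact hgt i j hi hjl hj
  · intro l hl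
    obtain ⟨⟨hperm, hav⟩, hsc⟩ := mem_AF.1 hl
    have hRL : ∀ i, i < l.length → IsRLMax l i := by
      rw [shortCount_eq_card, Finset.card_eq_zero, Finset.filter_eq_empty_iff] at hsc
      intro i hi
      exact not_not.1 (hsc (Finset.mem_range.2 hi))
    have hpl : List.Pairwise (fun x y => y < x) l := by
      rw [List.pairwise_iff_getElem]
      intro i j hi hj hij
      have := hRL i hi j hij hj
      rwa [List.getD_eq_getElem _ 0 hj, List.getD_eq_getElem _ 0 hi] at this
    haveI : IsAntisymm ℕ (fun x y => y < x) := ⟨fun a b h1 h2 => by omega⟩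
    exact List.Perm.eq_of_pairwise (fun a b _ _ h1 h2 => by omega) hpl hpair (hperm.trans (List.range' 1 m).reverse_perm.symm)

lemma cC_pred (m : ℕ) (hm : 1 ≤ m) : cC m (m - 1) = catC (m - 1) := by
  rw [cC_sum m (m - 1) hm, Finset.sum_eq_single (m - 1)]
  · rw [if_pos le_rfl, show m - 1 - (m - 1) = 0 by omega, cC_zero, mul_one]
  · intro a ha hane
    rw [Finset.mem_range] at ha
    by_cases h' : a ≤ m - 1
    · rw [if_pos h', cC_ge (m - 1 - a) (m - 1 - a) (by omega) le_rfl, mul_zero]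
    · rw [if_neg h']
  · intro h
    exact absurd (Finset.mem_range.2 (by omega)) h

lemma cC_key : ∀ n r : ℕ, 2 ≤ n → 1 ≤ r → r ≤ n - 1 →
    cC n r = cC (n - 1) r + cC n (r - 1) := by
  intro n
  induction n using Nat.strong_induction_on with
  | _ n ih =>
    intro r hn hr1 hr2
    by_cases hrn : r = n - 1
    · subst hrn
      rw [cC_pred n (by omega), cC_ge (n - 1) (n - 1) (by omega) le_rfl, Nat.zero_add,
        cC_sum n (n - 1 - 1) (by omega), catC_sum (n - 1) (by omega)]
      obtain ⟨q, rfl⟩ : ∃ q, n = q + 1 := ⟨n - 1, by omega⟩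
      simp only [Nat.add_sub_cancel]
      rw [Finset.sum_range_succ, if_neg (by omega), Nat.add_zero]
      apply Finset.sum_congr rfl
      intro a ha
      rw [Finset.mem_range] at ha
      rw [if_pos (by omega), show q - 1 - a = (q - a) - 1 by omega, cC_pred (q - a) (by omega)]
    · rw [cC_sum n r (by omega), cC_sum (n - 1) r (by omega), cC_sum n (r - 1) (by omega)]
      obtain ⟨q, rfl⟩ : ∃ q, n = q + 1 := ⟨n - 1, by omega⟩
      simp only [Nat.add_sub_cancel]
      rw [show (∑ a ∈ Finset.range q, if a ≤ r then catC a * cC (q - 1 - a) (r - a) else 0)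
          = ∑ a ∈ Finset.range (q + 1),
              if a ≤ r then catC a * cC (q - 1 - a) (r - a) else 0 from by
        rw [Finset.sum_range_succ, if_neg (by omega), Nat.add_zero]]
      rw [← Finset.sum_add_distrib]
      apply Finset.sum_congr rfl
      intro a ha
      rw [Finset.mem_range] at ha
      rcases lt_trichotomy a r with h' | h' | h'
      · rw [if_pos (by omega), if_pos (by omega), if_pos (by omega)]
        have hih := ih (q - a) (by omega) (r - a) (by omega) (by omega) (by omega)
        rw [show q - a - 1 = q - 1 - a by omega, show r - a - 1 = r - 1 - a by omega] at hih
        rw [hih, Nat.mul_add]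
      · subst h'
        rw [if_pos le_rfl, if_pos le_rfl, if_neg (by omega),
          show a - a = 0 by omega, cC_zero, cC_zero]
        omega
      · rw [if_neg (by omega), if_neg (by omega), if_neg (by omega), Nat.add_zero]

end Base


/-- For `n ≥ 2` and `1 ≤ r ≤ n-1`, `|A(n, r)| = |A(n-1, r)| + |A(n, r-1)|`. -/
theorem card_A132_add (n r : ℕ) (hn : 2 ≤ n) (hr1 : 1 ≤ r) (hr2 : r ≤ n - 1) :
    (A132 n r).ncard = (A132 (n - 1) r).ncard + (A132 n (r - 1)).ncard := by
  rw [A132_eq n r, A132_eq (n - 1) r, A132_eq n (r - 1), Set.ncard_coe_finset,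
    Set.ncard_coe_finset, Set.ncard_coe_finset]
  exact cC_key n r hn hr1 hr2
end

section
/- Let π be a 132-avoiding permutation of length n whose last entry is 1, and let 0 ≤ i ≤ n. If the insertion step at position i applied to π removes at least one entry (i.e., inserting the value n+1 after the first i entries creates an occurrence of 132), then it removes at least two entries; in particular, the output of the insertion step then has length at most n−1. -/
open List

attribute [local instance] Classical.propDecidable

/-- Decompose a sublist of `M ++ [a]`. -/
lemma sublist_concat_cases {s M : List ℕ} {a : ℕ} (hs : s.Sublist (M ++ [a])) :
    s.Sublist M ∨ ∃ t, s = t ++ [a] ∧ t.Sublist M := by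
  rw [List.sublist_append_iff] at hs
  obtain ⟨l₁, l₂, rfl, h1, h2⟩ := hs
  rcases List.sublist_singleton.1 h2 with rfl | rfl
  · left; simpa using h1
  · right; exact ⟨l₁, rfl, h1⟩

/-- Extract the order relations from an occurrence of the pattern 132. -/
lemma iso132 {s : List ℕ} (iso : OrderIsoList s [1, 3, 2]) :
    s.length = 3 ∧ s.getD 0 0 < s.getD 2 0 ∧ ¬ s.getD 1 0 < s.getD 2 0 := by
  obtain ⟨hl, hord⟩ := iso
  have hl3 : s.length = 3 := by simpa using hl
  refine ⟨hl3, (hord 0 2 (by norm_num) (by omega)).mpr (by decide), fun hlt => ?_⟩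
  have := (hord 1 2 (by norm_num) (by omega)).mp hlt
  exact absurd this (by decide)

/-- If the last entry of a 132-avoiding permutation `π` of length `n` is `1` and the
insertion step at position `i` removes at least one entry (i.e. inserting the new maximum
creates an occurrence of 132), then it removes at least two entries; in particular the
output has length at most `n - 1`. -/
theorem removes_at_least_two (n : ℕ) (π : List ℕ)
    (h : IsPermList n π) (ha : AvoidsPat π [1, 3, 2]) (hlast : π.getLast? = some 1)
    (i : ℕ) (hi : i ≤ n) (hrem : ContainsPat (insertMax π i) [1, 3, 2]) :
    (insStep [1, 3, 2] π i).length + 2 ≤ n + 1 ∧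
      (insStep [1, 3, 2] π i).length ≤ n - 1 := by
  have hπlen : π.length = n := by simpa using h.length_eq
  have hπne : π ≠ [] := by
    intro e; rw [e] at hlast; simp at hlast
  have hn1 : 1 ≤ n := by
    have : 0 < π.length := List.length_pos_iff.2 hπne
    omega
  have hmem : ∀ x ∈ π, 1 ≤ x ∧ x ≤ n := by
    intro x hx
    have := h.subset hx
    rw [List.mem_range'_1] at this
    omega
  set L := insertMax π i with hL
  have hLlen : L.length = n + 1 := by
    simp [hL, insertMax, hπlen]
    omega
  -- the case i = n is impossible
  by_cases hin : i = n
  · exfalso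
    subst hin
    have ht : π.take i = π := by rw [← hπlen]; exact List.take_length
    have hd : π.drop i = [] := by rw [← hπlen]; exact List.drop_length
    have hLeq : L = π ++ [i + 1] := by
      rw [hL, insertMax, ht, hd, hπlen]
    obtain ⟨s, hs, iso⟩ := hrem
    obtain ⟨hs3, h02, h12⟩ := iso132 iso
    rw [hLeq] at hs
    rcases sublist_concat_cases hs with hs' | ⟨t, rfl, ht'⟩
    · exact ha ⟨s, hs', iso⟩
    · have htlen : t.length = 2 := by
        have := hs3; simp at this; omega
      obtain ⟨x, y, rfl⟩ := List.length_eq_two.1 htlen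
      have hy : y ∈ π := ht'.subset (by simp)
      have := (hmem y hy).2
      simp [List.getD] at h12
      omega
  -- main case : i < n
  have hiln : i < n := lt_of_le_of_ne hi hin
  have hdropne : π.drop i ≠ [] := by
    intro e
    have := congrArg List.length e
    simp [hπlen] at this
    omega
  have hdlast : (π.drop i).getLast? = some 1 := by
    have h1 : (π.take i ++ π.drop i).getLast? = (π.drop i).getLast? :=
      List.getLast?_append_of_ne_nil _ hdropne
    rw [List.take_append_drop] at h1
    exact h1.symm.trans hlast
  have hLlast : L.getLast? = some 1 := by
    have he : L = (π.take i ++ [π.length + 1]) ++ π.drop i := by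
      simp [hL, insertMax]
    rw [he, List.getLast?_append_of_ne_nil _ hdropne, hdlast]
  have hLne : L ≠ [] := by
    intro e; rw [e] at hLlast; simp at hLlast
  have hgl : L.getLast hLne = 1 := by
    have := List.getLast?_eq_getLast_of_ne_nil hLne
    rw [hLlast] at this
    exact (Option.some_injective _ this).symm
  have hconc : L.dropLast ++ [1] = L := by
    have := List.dropLast_concat_getLast hLne
    rw [hgl] at this
    exact this
  have htake : L.take n = L.dropLast := by
    rw [List.dropLast_eq_take, hLlen]
    simp
  have hLmem : ∀ x ∈ L, 1 ≤ x := by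
    intro x hx
    rw [hL, insertMax] at hx
    simp only [List.mem_append, List.mem_cons] at hx
    rcases hx with hx | hx | hx
    · exact (hmem x ((List.take_sublist _ _).subset hx)).1
    · omega
    · exact (hmem x ((List.drop_sublist _ _).subset hx)).1
  -- the truncated list still contains the pattern
  have hcont : ContainsPat L.dropLast [1, 3, 2] := by
    obtain ⟨s, hs, iso⟩ := hrem
    obtain ⟨hs3, h02, h12⟩ := iso132 iso
    have hs' := hs
    rw [← hconc] at hs'
    rcases sublist_concat_cases hs' with hs'' | ⟨t, rfl, ht'⟩
    · exact ⟨s, hs'', iso⟩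
    · exfalso
      have htlen : t.length = 2 := by
        have := hs3; simp at this; omega
      obtain ⟨x, y, rfl⟩ := List.length_eq_two.1 htlen
      have hx : x ∈ L := hs.subset (by simp)
      have := hLmem x hx
      simp [List.getD] at h02
      omega
  -- findGreatest analysis
  have hPn : ¬ AvoidsPat (L.take n) [1, 3, 2] := by
    rw [htake]; exact fun hA => hA hcont
  have hPn1 : ¬ AvoidsPat (L.take (n + 1)) [1, 3, 2] := by
    rw [← hLlen, List.take_length]
    exact fun hA => hA (hL ▸ hrem)
  have hmle : Nat.findGreatest (fun k => AvoidsPat (L.take k) [1, 3, 2]) L.length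
      ≤ L.length := Nat.findGreatest_le _
  have hm1 : Nat.findGreatest (fun k => AvoidsPat (L.take k) [1, 3, 2]) L.length ≠ n + 1 := by
    intro e
    exact hPn1 (Nat.findGreatest_of_ne_zero e (by omega))
  have hm0 : Nat.findGreatest (fun k => AvoidsPat (L.take k) [1, 3, 2]) L.length ≠ n := by
    intro e
    exact hPn (Nat.findGreatest_of_ne_zero e (by omega))
  have hlen : (insStep [1, 3, 2] π i).length
      = Nat.findGreatest (fun k => AvoidsPat (L.take k) [1, 3, 2]) L.length := by
    rw [insStep, standardize, List.length_map, List.length_take, ← hL]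
    exact min_eq_left hmle
  constructor <;> omega
end

section
/- Let π be a 132-avoiding permutation of length n ≥ 2 whose last entry is 1, and let π̂ be the standardization of π with its last entry removed (a 132-avoiding permutation of length n−1). If 0 ≤ i ≤ n−1 and the insertion step at position i applied to π removes at least one entry, then the output of the insertion step at position i applied to π equals the output of the insertion step at position i applied to π̂. -/
open List

attribute [local instance] Classical.propDecidable

lemma take_sublist_take (l : List ℕ) {m k : ℕ} (h : m ≤ k) : l.take m <+ l.take k := by
  have : l.take m = (l.take k).take m := by rw [List.take_take, Nat.min_eq_left h]
  rw [this]; exact List.take_sublist _ _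

lemma contains_of_sublist {l₁ l₂ p : List ℕ} (h : l₁ <+ l₂) :
    ContainsPat l₁ p → ContainsPat l₂ p := by
  rintro ⟨s, hs, hiso⟩; exact ⟨s, hs.trans h, hiso⟩

lemma contains132_iff (l : List ℕ) :
    ContainsPat l [1, 3, 2] ↔ ∃ a b c : ℕ, [a, b, c] <+ l ∧ a < b ∧ a < c ∧ c ≤ b := by
  constructor
  · rintro ⟨s, hs, hlen, hiso⟩
    simp only [List.length_cons, List.length_nil] at hlen
    obtain ⟨a, b, c, rfl⟩ := List.length_eq_three.mp hlen
    have h01 := hiso 0 1 (by norm_num) (by simp [hlen])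
    have h02 := hiso 0 2 (by norm_num) (by simp [hlen])
    have h12 := hiso 1 2 (by norm_num) (by simp [hlen])
    simp [List.getD] at h01 h02 h12
    exact ⟨a, b, c, hs, h01, h02, by omega⟩
  · rintro ⟨a, b, c, hs, h1, h2, h3⟩
    refine ⟨[a, b, c], hs, by simp, ?_⟩
    intro i j hij hj
    simp only [List.length_cons, List.length_nil] at hj
    interval_cases j <;> interval_cases i <;> simp [List.getD] <;> omega

lemma takeWhile_stop {p : ℕ → Bool} : ∀ (l : List ℕ) (d : ℕ),
    l[(l.takeWhile p).length]? = some d → p d = false := by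
  intro l
  induction l with
  | nil => intro d h; simp at h
  | cons a l ih =>
    intro d h
    by_cases hpa : p a
    · rw [show (a :: l).takeWhile p = a :: l.takeWhile p by simp [List.takeWhile_cons, hpa]] at h
      simp only [List.length_cons, List.getElem?_cons_succ] at h
      exact ih d h
    · rw [show (a :: l).takeWhile p = [] by simp [List.takeWhile_cons, hpa]] at h
      simp only [List.length_nil, List.getElem?_cons_zero, Option.some.injEq] at h
      subst h
      simpa using hpa

lemma insStep_eq_of (p l : List ℕ) (i c : ℕ) (hc : c ≤ (insertMax l i).length)
    (h1 : AvoidsPat ((insertMax l i).take c) p)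
    (h2 : ContainsPat ((insertMax l i).take (c + 1)) p) :
    insStep p l i = standardize ((insertMax l i).take c) := by
  unfold insStep
  congr 1
  congr 1
  rw [Nat.findGreatest_eq_iff]
  refine ⟨hc, fun _ => h1, fun k hk hk' hav => ?_⟩
  exact hav (contains_of_sublist (take_sublist_take _ (by omega)) h2)

lemma standardize_map_sub (l : List ℕ) (h : ∀ x ∈ l, 1 ≤ x) :
    standardize (l.map fun x => x - 1) = standardize l := by
  unfold standardize
  rw [List.map_map]
  apply List.map_congr_left
  intro a ha
  simp only [Function.comp_apply]
  rw [← List.countP_eq_length_filter, ← List.countP_eq_length_filter, List.countP_map]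
  apply List.countP_congr
  intro x hx
  have hx1 := h x hx
  have ha1 := h a ha
  simp only [Function.comp_apply, decide_eq_true_eq]
  omega

lemma contains132_map_sub (l : List ℕ) (h : ∀ x ∈ l, 1 ≤ x) :
    ContainsPat (l.map fun x => x - 1) [1, 3, 2] ↔ ContainsPat l [1, 3, 2] := by
  rw [contains132_iff, contains132_iff]
  constructor
  · rintro ⟨a, b, c, hs, h1, h2, h3⟩
    rw [List.sublist_map_iff] at hs
    obtain ⟨l', hl', heq⟩ := hs
    have hlen : l'.length = 3 := by
      have := congrArg List.length heq; simpa using this.symm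
    obtain ⟨a', b', c', rfl⟩ := List.length_eq_three.mp hlen
    simp only [List.map_cons, List.map_nil, List.cons.injEq, and_true] at heq
    obtain ⟨rfl, rfl, rfl⟩ := heq
    have ha' := h a' (hl'.subset (by simp))
    have hb' := h b' (hl'.subset (by simp))
    have hc' := h c' (hl'.subset (by simp))
    exact ⟨a', b', c', hl', by omega, by omega, by omega⟩
  · rintro ⟨a, b, c, hs, h1, h2, h3⟩
    have ha := h a (hs.subset (by simp))
    refine ⟨a - 1, b - 1, c - 1, ?_, by omega, by omega, by omega⟩
    have := hs.map (fun x => x - 1)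
    simpa using this

lemma triple_sublist_middle {a b c v : ℕ} {X D : List ℕ} (h : [a, b, c] <+ X ++ v :: D) :
    ([a, b, c] <+ X ++ D) ∨ (a = v ∧ [b, c] <+ D) ∨ (b = v ∧ [a] <+ X ∧ [c] <+ D) ∨
      (c = v ∧ [a, b] <+ X) := by
  rw [List.sublist_append_iff] at h
  obtain ⟨l₁, l₂, heq, h1, h2⟩ := h
  rcases List.sublist_cons_iff.mp h2 with h2' | ⟨r, rfl, hr⟩
  · left; rw [heq]; exact h1.append h2'
  · match l₁, heq with
    | [], heq =>
      simp only [List.nil_append, List.cons.injEq] at heq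
      obtain ⟨rfl, heq2⟩ := heq
      exact Or.inr (Or.inl ⟨rfl, heq2.symm ▸ hr⟩)
    | [x], heq =>
      simp only [List.cons_append, List.nil_append, List.cons.injEq] at heq
      obtain ⟨rfl, rfl, heq2⟩ := heq
      exact Or.inr (Or.inr (Or.inl ⟨rfl, h1, heq2.symm ▸ hr⟩))
    | [x, y], heq =>
      simp only [List.cons_append, List.nil_append, List.cons.injEq] at heq
      obtain ⟨rfl, rfl, rfl, -⟩ := heq
      exact Or.inr (Or.inr (Or.inr ⟨rfl, h1⟩))
    | [x, y, z], heq => simp at heq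
    | (x :: y :: z :: w :: t), heq => simp at heq

lemma helper_count (p : ℕ → Bool) (x n : ℕ) (hp : ∀ y, p y = true ↔ y ≤ x)
    (h2 : 2 ≤ x) (hxn : x ≤ n) :
    List.countP p (List.range' 2 (n - 1)) = x - 1 := by
  have hsplit2 : List.range' 2 (n - 1) = List.range' 2 (x - 1) ++ List.range' (x + 1) (n - x) := by
    have h := List.range'_append (s := 2) (m := x - 1) (n := n - x) (step := 1)
    rw [show 2 + 1 * (x - 1) = x + 1 by omega, show x - 1 + (n - x) = n - 1 by omega] at h
    exact h.symm
  rw [hsplit2, List.countP_append]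
  have hall1 : ∀ a ∈ List.range' 2 (x - 1), p a = true := by
    intro a hamem
    rw [List.mem_range'_1] at hamem
    rw [hp]
    omega
  have hall2 : ∀ a ∈ List.range' (x + 1) (n - x), ¬ p a = true := by
    intro a hamem
    rw [List.mem_range'_1] at hamem
    rw [hp]
    omega
  rw [List.countP_eq_length.mpr hall1, List.countP_eq_zero.mpr hall2, List.length_range']
  omega


/-- Let `π` be a 132-avoiding permutation of length `n ≥ 2` whose last entry is `1`, and
let `π̂` be the standardization of `π` with its last entry removed.  If `0 ≤ i ≤ n - 1`
and the insertion step at position `i` applied to `π` removes at least one entry, then the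
insertion steps at position `i` applied to `π` and to `π̂` have the same output. -/
theorem insStep_dropLast (n : ℕ) (π : List ℕ) (hn : 2 ≤ n)
    (h : IsPermList n π) (ha : AvoidsPat π [1, 3, 2]) (hlast : π.getLast? = some 1)
    (i : ℕ) (hi : i ≤ n - 1) (hrem : ContainsPat (insertMax π i) [1, 3, 2]) :
    insStep [1, 3, 2] π i = insStep [1, 3, 2] (standardize π.dropLast) i := by
  have hperm : π.Perm (List.range' 1 n) := h
  have hlen : π.length = n := by
    have := hperm.length_eq; simpa using this
  have hnodup : π.Nodup := hperm.symm.nodup (List.nodup_range' (s := 1) (n := n))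
  have hmemπ : ∀ x ∈ π, 1 ≤ x ∧ x ≤ n := by
    intro x hx
    have := hperm.subset hx
    rw [List.mem_range'_1] at this
    omega
  have hne : π ≠ [] := by
    intro h0; rw [h0] at hlen; simp at hlen; omega
  have hlast1 : π.getLast hne = 1 := by
    have h' := List.getLast?_eq_getLast hne
    rw [h'] at hlast
    exact Option.some_injective _ hlast
  have hsplit : π.dropLast ++ [1] = π := by
    have h' := List.dropLast_append_getLast hne
    rwa [hlast1] at h'
  have hdlen : π.dropLast.length = n - 1 := by rw [List.length_dropLast, hlen]
  set X := π.take i with hX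
  set D := π.drop i with hD
  have hXlen : X.length = i := by rw [hX, List.length_take, hlen]; omega
  have hDlen : D.length = n - i := by rw [hD, List.length_drop, hlen]
  have hXD : X ++ D = π := List.take_append_drop i π
  have hXsub : X ⊆ π := List.take_subset i π
  have hDsub : D ⊆ π := List.drop_subset i π
  have hdisj : X.Disjoint D := by
    have h' : (X ++ D).Nodup := by rw [hXD]; exact hnodup
    exact (List.nodup_append'.mp h').2.2
  have hXtake : X = π.dropLast.take i := by
    rw [hX, List.dropLast_eq_take, List.take_take, hlen, Nat.min_eq_left hi]
  have h1nd : (1:ℕ) ∉ π.dropLast := by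
    intro hmem
    have hnd : (π.dropLast ++ [1]).Nodup := by rw [hsplit]; exact hnodup
    exact (List.nodup_append'.mp hnd).2.2 hmem (by simp)
  have hX2 : ∀ x ∈ X, 2 ≤ x ∧ x ≤ n := by
    intro x hx
    have hxd : x ∈ π.dropLast := List.take_subset _ _ (hXtake ▸ hx)
    have hb := hmemπ x (hXsub hx)
    have : x ≠ 1 := fun h' => h1nd (h' ▸ hxd)
    omega
  set D'' := π.dropLast.drop i with hD''
  have hD''len : D''.length = n - 1 - i := by rw [hD'', List.length_drop, hdlen]
  have hDsplit : D = D'' ++ [1] := by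
    conv_lhs => rw [hD, ← hsplit]
    rw [List.drop_append, hdlen, hD'']
    congr 1
    rw [show i - (n-1) = 0 by omega]
    rfl
  have hA : insertMax π i = X ++ (n + 1) :: D := by rw [insertMax, hlen]
  have hmemA : ∀ x ∈ X ++ (n + 1) :: D, x ≤ n + 1 := by
    intro x hx
    rcases List.mem_append.mp hx with hx | hx
    · exact le_trans (hmemπ x (hXsub hx)).2 (by omega)
    · rcases List.mem_cons.mp hx with rfl | hx
      · exact le_refl _
      · exact le_trans (hmemπ x (hDsub hx)).2 (by omega)
  obtain ⟨a0, ha0X, c0, hc0D, hac0⟩ : ∃ a ∈ X, ∃ c ∈ D, a < c := by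
    rw [hA, contains132_iff] at hrem
    obtain ⟨a, b, c, hs, h1, h2, h3⟩ := hrem
    rcases triple_sublist_middle hs with hcase | ⟨rfl, h2'⟩ | ⟨rfl, hax, hcd⟩ | ⟨rfl, hab⟩
    · exact absurd ((contains132_iff π).mpr ⟨a, b, c, hXD ▸ hcase, h1, h2, h3⟩) ha
    · have hbmem : b ∈ X ++ (n + 1) :: D := hs.subset (by simp)
      have := hmemA b hbmem; omega
    · exact ⟨a, List.singleton_sublist.mp hax, c, List.singleton_sublist.mp hcd, h2⟩
    · have hbX : b ∈ X := hab.subset (by simp)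
      have := (hX2 b hbX).2; omega
  set q : ℕ → Bool := fun y => decide (∀ x ∈ X, y < x) with hq
  set T := D.takeWhile q with hT
  set t := T.length with ht
  have hTpre : T <+: D := List.takeWhile_prefix q
  have hTtake : T = D.take t := List.prefix_iff_eq_take.mp hTpre
  have hTsub : T <+ D := by rw [hTtake]; exact List.take_sublist t D
  have htlt : t < D.length := by
    rcases Nat.lt_or_ge t D.length with h' | h'
    · exact h'
    · exfalso
      have hTeq : T = D := hTpre.eq_of_length (le_antisymm hTpre.length_le h')
      have hall := List.takeWhile_eq_self_iff.mp (hT ▸ hTeq : D.takeWhile q = D)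
      have hqc := hall c0 hc0D
      rw [hq] at hqc
      have := decide_eq_true_eq.mp hqc
      exact absurd (this a0 ha0X) (by omega)
  have hq1 : q 1 = true := by
    rw [hq, decide_eq_true_eq]
    intro x hx
    have := hX2 x hx
    omega
  have hTD2 : T = D''.takeWhile q ∧ t < D''.length := by
    have happ : D.takeWhile q = if (D''.takeWhile q).length = D''.length
        then D'' ++ [1].takeWhile q else D''.takeWhile q := by
      conv_lhs => rw [hDsplit]
      exact List.takeWhile_append
    by_cases hcond : (D''.takeWhile q).length = D''.length
    · exfalso
      rw [if_pos hcond] at happ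
      have h1' : [1].takeWhile q = [1] := by
        rw [List.takeWhile_cons]
        simp [hq1]
      rw [h1'] at happ
      have hTD : T = D := by rw [hT, happ, hDsplit]
      have : t = D.length := by rw [ht, hTD]
      omega
    · constructor
      · rw [hT, happ, if_neg hcond]
      · have hle : (D''.takeWhile q).length ≤ D''.length := (List.takeWhile_prefix q).length_le
        have : t = (D''.takeWhile q).length := by rw [ht, hT, happ, if_neg hcond]
        omega
  obtain ⟨hTD'', htlt''⟩ := hTD2
  have hTtake'' : T = D''.take t := by
    have hpre2 : T <+: D'' := by rw [hTD'']; exact List.takeWhile_prefix q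
    have h' := List.prefix_iff_eq_take.mp hpre2
    rw [← ht] at h'
    exact h'
  have hd' : D''[t]? = some (D''[t]'htlt'') := List.getElem?_eq_getElem htlt''
  set d' := D''[t]'htlt'' with hd'def
  have hqd' : q d' = false := by
    apply takeWhile_stop D'' d'
    have hlen' : (D''.takeWhile q).length = t := by rw [← hTD'', ← ht]
    rw [hlen']
    exact hd'
  have hd'D'' : d' ∈ D'' := List.mem_of_getElem? hd'
  have hd'D : d' ∈ D := by rw [hDsplit]; exact List.mem_append.mpr (Or.inl hd'D'')
  obtain ⟨x0, hx0X, hx0le⟩ : ∃ x ∈ X, x ≤ d' := by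
    have h' : ¬ (∀ x ∈ X, d' < x) := by
      rw [hq] at hqd'
      exact of_decide_eq_false hqd'
    push_neg at h'
    obtain ⟨x, hx, hx'⟩ := h'
    exact ⟨x, hx, by omega⟩
  have hx0d : x0 < d' := by
    have hne' : x0 ≠ d' := fun h' => hdisj hx0X (by rw [h']; exact hd'D)
    omega
  have hDt : D[t]? = some d' := by
    rw [hDsplit, List.getElem?_append_left htlt'']
    exact hd'
  have htake_gen : ∀ (Y Z : List ℕ) (v k : ℕ), Y.length = i →
      (Y ++ v :: Z).take (i + 1 + k) = Y ++ v :: Z.take k := by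
    intro Y Z v k hY
    rw [List.take_append, hY, List.take_of_length_le (by omega),
      show i + 1 + k - i = k + 1 by omega, List.take_succ_cons]
  have hIA : (insertMax π i).take (i + 1 + t) = X ++ (n + 1) :: T := by
    rw [hA, htake_gen X D (n+1) t hXlen, ← hTtake]
  have hIA1 : (insertMax π i).take (i + 1 + t + 1) = X ++ (n + 1) :: (T ++ [d']) := by
    rw [hA, show i + 1 + t + 1 = i + 1 + (t + 1) by omega, htake_gen X D (n+1) (t+1) hXlen]
    congr 2
    rw [List.take_succ, ← hTtake, hDt]
    rfl
  have hmemK1 : ∀ x ∈ X ++ (n + 1) :: T, 1 ≤ x := by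
    intro x hx
    rcases List.mem_append.mp hx with hx | hx
    · exact (hmemπ x (hXsub hx)).1
    · rcases List.mem_cons.mp hx with rfl | hx
      · omega
      · exact (hmemπ x (hDsub (hTsub.subset hx))).1
  have havoidK : AvoidsPat (X ++ (n + 1) :: T) [1, 3, 2] := by
    intro hcon
    rw [contains132_iff] at hcon
    obtain ⟨a, b, c, hs, h1, h2, h3⟩ := hcon
    rcases triple_sublist_middle hs with hcase | ⟨rfl, h2'⟩ | ⟨rfl, hax, hcT⟩ | ⟨rfl, hab⟩
    · have hsub2 : X ++ T <+ π := by
        rw [← hXD]; exact (List.Sublist.refl X).append hTsub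
      exact ha ((contains132_iff π).mpr ⟨a, b, c, hcase.trans hsub2, h1, h2, h3⟩)
    · have hbmem : b ∈ X ++ (n + 1) :: T := hs.subset (by simp)
      have hb : b ≤ n + 1 := by
        rcases List.mem_append.mp hbmem with hx | hx
        · exact le_trans (hX2 b hx).2 (by omega)
        · rcases List.mem_cons.mp hx with h' | hx
          · omega
          · exact le_trans (hmemπ b (hDsub (hTsub.subset hx))).2 (by omega)
      omega
    · have hcT' : c ∈ T := List.singleton_sublist.mp hcT
      have hqc : ∀ x ∈ X, c < x := by
        have hm := List.mem_takeWhile_imp (hT ▸ hcT')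
        rw [hq] at hm
        exact decide_eq_true_eq.mp hm
      have := hqc a (List.singleton_sublist.mp hax)
      omega
    · have hbX : b ∈ X := hab.subset (by simp)
      have := (hX2 b hbX).2
      omega
  have hcontK : ContainsPat (X ++ (n + 1) :: (T ++ [d'])) [1, 3, 2] := by
    rw [contains132_iff]
    refine ⟨x0, n + 1, d', ?_, ?_, hx0d, ?_⟩
    · have hs1 : [x0] <+ X := List.singleton_sublist.mpr hx0X
      have hs2 : [d'] <+ T ++ [d'] := List.sublist_append_right T [d']
      have hs3 : (n + 1) :: [d'] <+ (n + 1) :: (T ++ [d']) := List.cons_sublist_cons.mpr hs2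
      simpa using hs1.append hs3
    · have := (hX2 x0 hx0X).2; omega
    · have := (hmemπ d' (hDsub hd'D)).2; omega
  have hAlen : (insertMax π i).length = n + 1 := by
    rw [hA]
    simp only [List.length_append, List.length_cons, hXlen, hDlen]
    omega
  have hLHS := insStep_eq_of [1,3,2] π i (i + 1 + t) (by rw [hAlen]; omega)
    (by rw [hIA]; exact havoidK) (by rw [hIA1]; exact hcontK)
  rw [hIA] at hLHS
  have h1n : List.range' 1 n = 1 :: List.range' 2 (n - 1) := by
    obtain ⟨m, rfl⟩ : ∃ m, n = m + 1 := ⟨n - 1, by omega⟩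
    rw [List.range'_succ]
    norm_num
  have hpermdl : π.dropLast ~ List.range' 2 (n - 1) := by
    have h2' : π.dropLast ++ [1] ~ 1 :: List.range' 2 (n - 1) := by
      rw [hsplit, ← h1n]
      exact hperm
    exact ((List.perm_append_singleton 1 π.dropLast).symm.trans h2').cons_inv
  have hstd : standardize π.dropLast = π.dropLast.map (fun x => x - 1) := by
    unfold standardize
    apply List.map_congr_left
    intro x hx
    have hx2 : 2 ≤ x ∧ x ≤ n := by
      have := hpermdl.subset hx
      rw [List.mem_range'_1] at this
      omega
    rw [← List.countP_eq_length_filter, hpermdl.countP_eq]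
    exact helper_count _ x n (fun y => by simp) hx2.1 hx2.2
  have hhatlen : (π.dropLast.map (fun x => x - 1)).length = n - 1 := by
    rw [List.length_map, hdlen]
  have hhtake : (π.dropLast.map (fun x => x - 1)).take i = X.map (fun x => x - 1) := by
    rw [← List.map_take, ← hXtake]
  have hhdrop : (π.dropLast.map (fun x => x - 1)).drop i = D''.map (fun x => x - 1) := by
    rw [← List.map_drop, ← hD'']
  have hB : insertMax (π.dropLast.map (fun x => x - 1)) i
      = X.map (fun x => x - 1) ++ n :: D''.map (fun x => x - 1) := by
    rw [insertMax, hhatlen, hhtake, hhdrop, show n - 1 + 1 = n by omega]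
  have hBlen : (insertMax (π.dropLast.map (fun x => x - 1)) i).length = n := by
    rw [hB]
    simp only [List.length_append, List.length_cons, List.length_map, hXlen]
    rw [hD''len]
    omega
  have hmapK : (X ++ (n + 1) :: T).map (fun x => x - 1)
      = X.map (fun x => x - 1) ++ n :: T.map (fun x => x - 1) := by
    simp only [List.map_append, List.map_cons]
    congr 2
  have hIB : (insertMax (π.dropLast.map (fun x => x - 1)) i).take (i + 1 + t)
      = (X ++ (n + 1) :: T).map (fun x => x - 1) := by
    rw [hB, htake_gen _ _ _ _ (by rw [List.length_map, hXlen]), hmapK]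
    congr 2
    rw [← List.map_take, ← hTtake'']
  have hd'take : D''.take (t + 1) = T ++ [d'] := by
    rw [List.take_succ, ← hTtake'', hd']
    rfl
  have hmapK1 : (X ++ (n + 1) :: (T ++ [d'])).map (fun x => x - 1)
      = X.map (fun x => x - 1) ++ n :: (T ++ [d']).map (fun x => x - 1) := by
    simp only [List.map_append, List.map_cons]
    congr 2
  have hIB1 : (insertMax (π.dropLast.map (fun x => x - 1)) i).take (i + 1 + t + 1)
      = (X ++ (n + 1) :: (T ++ [d'])).map (fun x => x - 1) := by
    rw [hB, show i + 1 + t + 1 = i + 1 + (t + 1) by omega,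
      htake_gen _ _ _ _ (by rw [List.length_map, hXlen]), hmapK1]
    congr 2
    rw [← List.map_take, hd'take]
  have hmemK1' : ∀ x ∈ X ++ (n + 1) :: (T ++ [d']), 1 ≤ x := by
    intro x hx
    rcases List.mem_append.mp hx with hx | hx
    · exact (hmemπ x (hXsub hx)).1
    · rcases List.mem_cons.mp hx with rfl | hx
      · omega
      · rcases List.mem_append.mp hx with hx | hx
        · exact (hmemπ x (hDsub (hTsub.subset hx))).1
        · have hxd : x = d' := by simpa using hx
          rw [hxd]
          exact (hmemπ d' (hDsub hd'D)).1
  have havoidK' : AvoidsPat ((X ++ (n + 1) :: T).map (fun x => x - 1)) [1, 3, 2] :=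
    fun hcon => havoidK ((contains132_map_sub _ hmemK1).mp hcon)
  have hcontK' : ContainsPat ((X ++ (n + 1) :: (T ++ [d'])).map (fun x => x - 1)) [1, 3, 2] :=
    (contains132_map_sub _ hmemK1').mpr hcontK
  have hRHS := insStep_eq_of [1,3,2] (π.dropLast.map (fun x => x - 1)) i (i + 1 + t)
    (by rw [hBlen]; omega) (by rw [hIB]; exact havoidK') (by rw [hIB1]; exact hcontK')
  rw [hIB] at hRHS
  rw [hstd, hRHS, hLHS, standardize_map_sub _ hmemK1]
end

section
/- Let π be a 213-avoiding permutation of length n whose maximal initial increasing run has length r. For 0 ≤ i ≤ n let τ_i be the output of the 213-insertion step at position i applied to π. Then the map i ↦ (|τ_i|, run(τ_i)), where run(σ) is the length of the maximal initial increasing run of σ, is a bijection from {0,…,n} onto the set {(n+1, s) : 1 ≤ s ≤ r+1} ∪ {(m, r) : r+1 ≤ m ≤ n}. -/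
open List

attribute [local instance] Classical.propDecidable

/-- The length of the maximal initial increasing run of `l`, i.e. of its longest
increasing prefix. -/
noncomputable def runLen (l : List ℕ) : ℕ :=
  Nat.findGreatest (fun k => (l.take k).Pairwise (· < ·)) l.length

lemma avoidsPat_sublist {s l p : List ℕ} (hs : s.Sublist l) (hl : AvoidsPat l p) :
    AvoidsPat s p := fun ⟨t, ht, hiso⟩ => hl ⟨t, ht.trans hs, hiso⟩

lemma contains213_of_triple {l : List ℕ} {x y z : ℕ}
    (hs : [x, y, z].Sublist l) (h1 : y ≤ x) (h2 : x < z) (h3 : y < z) :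
    ContainsPat l [2, 1, 3] := by
  refine ⟨[x, y, z], hs, rfl, ?_⟩
  intro i j hij hj
  simp only [List.length] at hj
  interval_cases j <;> interval_cases i <;>
    simp [List.getD] <;> omega

lemma triple_of_contains213 {l : List ℕ} (hc : ContainsPat l [2, 1, 3]) :
    ∃ x y z, [x, y, z].Sublist l ∧ y ≤ x ∧ x < z ∧ y < z := by
  obtain ⟨s, hs, hlen, hiso⟩ := hc
  have hlen3 : s.length = 3 := by simpa using hlen
  obtain ⟨x, y, z, rfl⟩ := List.length_eq_three.mp hlen3
  refine ⟨x, y, z, hs, ?_, ?_, ?_⟩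
  · have := hiso 0 1 (by omega) (by simp)
    simp [List.getD] at this; omega
  · have := hiso 0 2 (by omega) (by simp)
    simp [List.getD] at this; omega
  · have := hiso 1 2 (by omega) (by simp)
    simp [List.getD] at this; omega

lemma stdFun_lt {l : List ℕ} {a b : ℕ} (hb : b ∈ l) :
    a < b ↔ (l.filter fun y => y ≤ a).length < (l.filter fun y => y ≤ b).length := by
  constructor
  · intro hab
    have hsub : (l.filter fun y => y ≤ a).Sublist (l.filter fun y => y ≤ b) :=
      List.monotone_filter_right l (by intro c hc; simp only [decide_eq_true_eq] at *; omega)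
    have hle := hsub.length_le
    rcases lt_or_eq_of_le hle with h | h
    · exact h
    · exfalso
      have heq := hsub.eq_of_length h
      have hbmem : b ∈ l.filter fun y => y ≤ b := by
        simp only [List.mem_filter, decide_eq_true_eq]; exact ⟨hb, le_refl b⟩
      rw [← heq] at hbmem
      simp only [List.mem_filter, decide_eq_true_eq] at hbmem
      omega
  · intro hfl
    by_contra hab
    push_neg at hab
    have hsub : (l.filter fun y => y ≤ b).Sublist (l.filter fun y => y ≤ a) :=
      List.monotone_filter_right l (by intro c hc; simp only [decide_eq_true_eq] at *; omega)
    have := hsub.length_le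
    omega

lemma findGreatest_congr {P Q : ℕ → Prop} [DecidablePred P] [DecidablePred Q]
    (h : ∀ k, P k ↔ Q k) (n : ℕ) : Nat.findGreatest P n = Nat.findGreatest Q n := by
  induction n with
  | zero => rfl
  | succ n ih =>
    rw [Nat.findGreatest_succ, Nat.findGreatest_succ, ih]
    by_cases hq : Q (n + 1)
    · rw [if_pos ((h (n+1)).mpr hq), if_pos hq]
    · rw [if_neg (fun hp => hq ((h (n+1)).mp hp)), if_neg hq]

lemma length_standardize (l : List ℕ) : (standardize l).length = l.length := by
  simp [standardize]

lemma runLen_standardize (l : List ℕ) : runLen (standardize l) = runLen l := by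
  unfold runLen
  rw [length_standardize]
  apply findGreatest_congr
  intro k
  show ((standardize l).take k).Pairwise (· < ·) ↔ (l.take k).Pairwise (· < ·)
  rw [standardize, ← List.map_take]
  show List.Pairwise _ _ ↔ List.Pairwise _ _
  rw [List.pairwise_map]
  exact List.Pairwise.iff_of_mem
    (fun {a b} _ hb => (stdFun_lt (List.mem_of_mem_take hb)).symm)

lemma sorted_take_mono {l : List ℕ} {m k : ℕ} (hmk : m ≤ k)
    (h : (l.take k).Pairwise (· < ·)) : (l.take m).Pairwise (· < ·) := by
  have : l.take m = (l.take k).take m := by rw [List.take_take, min_eq_left hmk]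
  rw [this]
  exact List.Pairwise.sublist (List.take_sublist m _) h

lemma runLen_eq {l : List ℕ} {m : ℕ} (h1 : m ≤ l.length)
    (h2 : (l.take m).Pairwise (· < ·))
    (h3 : ∀ k, m < k → k ≤ l.length → ¬ (l.take k).Pairwise (· < ·)) : runLen l = m := by
  unfold runLen
  rw [Nat.findGreatest_eq_iff]
  exact ⟨h1, fun _ => h2, h3⟩

lemma runLen_spec (l : List ℕ) :
    runLen l ≤ l.length ∧ (l.take (runLen l)).Pairwise (· < ·) ∧
      ∀ k, runLen l < k → k ≤ l.length → ¬ (l.take k).Pairwise (· < ·) := by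
  have h := (Nat.findGreatest_eq_iff
    (P := fun k => (l.take k).Pairwise (· < ·)) (k := l.length) (m := runLen l)).mp rfl
  refine ⟨h.1, ?_, h.2.2⟩
  rcases Nat.eq_zero_or_pos (runLen l) with h0 | h0
  · rw [h0]; simp
  · exact h.2.1 (by omega)

lemma main_calc (n r : ℕ) (π : List ℕ)
    (h : IsPermList n π) (ha : AvoidsPat π [2, 1, 3]) (hr : runLen π = r)
    (i : ℕ) (hi : i ≤ n) :
    ((insStep [2, 1, 3] π i).length, runLen (insStep [2, 1, 3] π i)) =
      if i ≤ r then (n + 1, i + 1) else (i, r) := by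
  have hlen : π.length = n := by simpa using h.length_eq
  have hmem : ∀ x ∈ π, x ≤ n := by
    intro x hx
    have := h.mem_iff.mp hx
    rw [List.mem_range'_1] at this
    omega
  obtain ⟨hrle0, hsr0, hns0⟩ := runLen_spec π
  rw [hr] at hsr0 hns0
  rw [hr, hlen] at hrle0
  rw [hlen] at hns0
  set L := insertMax π i with hLdef
  have hL : L = π.take i ++ (n + 1) :: π.drop i := by
    rw [hLdef, insertMax, hlen]
  have htakelen : (π.take i).length = i := by
    rw [List.length_take, hlen, min_eq_left hi]
  have hLlen : L.length = n + 1 := by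
    rw [hL]
    simp only [List.length_append, List.length_cons, List.length_drop, htakelen, hlen]
    omega
  have htakeiL : L.take i = π.take i := by
    have := List.take_left (l₁ := π.take i) (l₂ := (n + 1) :: π.drop i)
    rw [htakelen] at this
    rw [hL, this]
  have htakei1L : L.take (i + 1) = π.take i ++ [n + 1] := by
    have := List.take_length_add_append (l₁ := π.take i) (l₂ := (n + 1) :: π.drop i) (i := 1)
    rw [htakelen] at this
    rw [hL, this]
    simp
  clear_value L
  by_cases hir : i ≤ r
  · -- Case A
    have hsi : (π.take i).Pairwise (· < ·) := sorted_take_mono hir hsr0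
    have hLav : AvoidsPat L [2, 1, 3] := by
      intro hc
      obtain ⟨x, y, z, hs, h1, h2, h3⟩ := triple_of_contains213 hc
      rw [hL] at hs
      obtain ⟨s₁, s₂, hsplit, hs1, hs2⟩ := List.sublist_append_iff.mp hs
      rcases List.sublist_cons_iff.mp hs2 with h2' | ⟨t, rfl, ht⟩
      · have hsub : [x, y, z].Sublist π := by
          rw [← List.take_append_drop i π]
          have := hs1.append h2'
          rwa [← hsplit] at this
        exact ha (contains213_of_triple hsub h1 h2 h3)
      · have hdle : ∀ w ∈ π.drop i, w ≤ n := fun w hw => hmem w (List.mem_of_mem_drop hw)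
        rcases s₁ with _ | ⟨a, _ | ⟨b, _ | ⟨c, s⟩⟩⟩
        · simp only [List.nil_append, List.cons.injEq] at hsplit
          obtain ⟨hx, hyz⟩ := hsplit
          have hz : z ∈ t := by rw [← hyz]; simp
          have := hdle z (ht.subset hz)
          omega
        · simp only [List.cons_append, List.nil_append, List.cons.injEq] at hsplit
          obtain ⟨hx, hy, hzt⟩ := hsplit
          have hz : z ∈ t := by rw [← hzt]; simp
          have := hdle z (ht.subset hz)
          omega
        · simp only [List.cons_append, List.nil_append, List.cons.injEq] at hsplit
          obtain ⟨hx, hy, hz, -⟩ := hsplit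
          subst hx hy
          have := List.Pairwise.sublist hs1 hsi
          simp at this
          omega
        · simp at hsplit
    have hfg : Nat.findGreatest (fun k => AvoidsPat (L.take k) [2, 1, 3]) L.length = n + 1 := by
      rw [hLlen, Nat.findGreatest_eq_iff]
      refine ⟨le_refl _, fun _ => ?_, fun k hk1 hk2 => absurd hk1 (by omega)⟩
      rwa [List.take_of_length_le hLlen.le]
    have hstep : insStep [2, 1, 3] π i = standardize L := by
      unfold insStep
      rw [← hLdef, hfg, List.take_of_length_le hLlen.le]
    have hrun : runLen (insStep [2, 1, 3] π i) = i + 1 := by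
      rw [hstep, runLen_standardize]
      apply runLen_eq
      · omega
      · rw [htakei1L]
        show List.Pairwise _ _
        rw [List.pairwise_append]
        refine ⟨hsi, by simp, ?_⟩
        intro a haM b hbM
        simp only [List.mem_singleton] at hbM
        subst hbM
        have := hmem a (List.mem_of_mem_take haM)
        omega
      · intro k hk1 hk2
        rw [hLlen] at hk2
        have hiln : i < n := by omega
        have hilen : i < π.length := by rw [hlen]; omega
        have hd : π.drop i = π[i]'hilen :: π.drop (i + 1) :=
          List.drop_eq_getElem_cons (by omega)
        have htk2 : L.take (i + 2) = π.take i ++ [n + 1, π[i]'hilen] := by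
          have h2a := List.take_length_add_append (l₁ := π.take i)
            (l₂ := (n + 1) :: π.drop i) (i := 2)
          rw [htakelen] at h2a
          rw [hd] at h2a
          rw [hL]
          rw [hd]
          rw [h2a]
          simp only [List.take_succ_cons, List.take_zero]
        intro hs
        have hs2 := sorted_take_mono (show i + 2 ≤ k by omega) hs
        rw [htk2] at hs2
        have hsub : [n + 1, π[i]'hilen].Sublist (π.take i ++ [n + 1, π[i]'hilen]) :=
          List.sublist_append_right _ _
        have hp := List.Pairwise.sublist hsub hs2
        simp at hp
        have := hmem (π[i]'hilen) (List.getElem_mem _)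
        omega
    rw [if_pos hir, hstep, length_standardize, hLlen, ← hstep, hrun]
  · -- Case B
    have hri : r < i := by omega
    have hrn' : r < n := by omega
    have hnots : ¬ (π.take (r + 1)).Pairwise (· < ·) := hns0 (r + 1) (by omega) (by omega)
    have hrlen : r < π.length := by rw [hlen]; omega
    have htr1 : π.take (r + 1) = π.take r ++ [π[r]'hrlen] := by
      rw [List.take_succ, List.getElem?_eq_getElem (by omega)]
      simp
    have hex : ∃ a ∈ π.take r, ¬ a < π[r]'hrlen := by
      by_contra hno
      push_neg at hno
      apply hnots
      rw [htr1]
      show List.Pairwise _ _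
      rw [List.pairwise_append]
      exact ⟨hsr0, by simp, by simpa using hno⟩
    obtain ⟨a, haM, haR⟩ := hex
    have har : π[r]'hrlen ≤ a := Nat.le_of_not_lt haR
    have haLe : a ≤ n := hmem a (List.mem_of_mem_take haM)
    have hgrLe : π[r]'hrlen ≤ n := hmem (π[r]'hrlen) (List.getElem_mem _)
    have hfg : Nat.findGreatest (fun k => AvoidsPat (L.take k) [2, 1, 3]) L.length = i := by
      rw [Nat.findGreatest_eq_iff]
      refine ⟨by omega, fun _ => ?_, ?_⟩
      · rw [htakeiL]
        exact avoidsPat_sublist (List.take_sublist i π) ha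
      · intro k hk1 hk2
        intro hav
        apply hav
        have hstep1 : [a, π[r]'hrlen].Sublist (π.take (r + 1)) := by
          rw [htr1]
          exact (List.singleton_sublist.mpr haM).append (List.Sublist.refl _)
        have hstep2 : [a, π[r]'hrlen].Sublist (π.take i) :=
          hstep1.trans (List.take_prefix_take_left (l := π) (by omega)).sublist
        have hstep3 : [a, π[r]'hrlen, n + 1].Sublist (L.take (i + 1)) := by
          rw [htakei1L]
          exact hstep2.append (List.Sublist.refl [n + 1])
        have hstep4 : [a, π[r]'hrlen, n + 1].Sublist (L.take k) :=
          hstep3.trans (List.take_prefix_take_left (l := L) (by omega)).sublist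
        exact contains213_of_triple hstep4 har (by omega) (by omega)
    have hstep : insStep [2, 1, 3] π i = standardize (π.take i) := by
      unfold insStep
      rw [← hLdef, hfg, htakeiL]
    have hrun : runLen (insStep [2, 1, 3] π i) = r := by
      rw [hstep, runLen_standardize]
      apply runLen_eq
      · rw [htakelen]; omega
      · rw [List.take_take, min_eq_left hri.le]
        exact hsr0
      · intro k hk1 hk2
        rw [htakelen] at hk2
        rw [List.take_take, min_eq_left hk2]
        exact hns0 k (by omega) (by omega)
    rw [if_neg hir, hstep, length_standardize, htakelen, ← hstep, hrun]

/-- For a 213-avoiding permutation `π` of length `n` with initial increasing run of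
length `r`, the map sending an insertion position `i ∈ {0,…,n}` to the pair
(length, initial-run length) of the output of the 213-insertion step at position `i`
is a bijection onto `{(n+1, s) : 1 ≤ s ≤ r+1} ∪ {(m, r) : r+1 ≤ m ≤ n}`. -/
theorem bijOn_insStep_run (n r : ℕ) (π : List ℕ)
    (h : IsPermList n π) (ha : AvoidsPat π [2, 1, 3]) (hr : runLen π = r) :
    Set.BijOn
      (fun i => ((insStep [2, 1, 3] π i).length, runLen (insStep [2, 1, 3] π i)))
      (Set.Iic n)
      ({q : ℕ × ℕ | q.1 = n + 1 ∧ 1 ≤ q.2 ∧ q.2 ≤ r + 1} ∪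
        {q : ℕ × ℕ | q.2 = r ∧ r + 1 ≤ q.1 ∧ q.1 ≤ n}) := by
  have hlen : π.length = n := by simpa using h.length_eq
  have hrn : r ≤ n := by
    have := (runLen_spec π).1
    rw [hr, hlen] at this
    exact this
  have key : ∀ i ≤ n,
      ((insStep [2, 1, 3] π i).length, runLen (insStep [2, 1, 3] π i)) =
        if i ≤ r then (n + 1, i + 1) else (i, r) :=
    fun i hi => main_calc n r π h ha hr i hi
  refine ⟨?_, ?_, ?_⟩
  · -- MapsTo
    intro i hi
    simp only [Set.mem_Iic] at hi
    show ((insStep [2, 1, 3] π i).length, runLen (insStep [2, 1, 3] π i)) ∈ _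
    rw [key i hi]
    by_cases hir : i ≤ r
    · rw [if_pos hir]
      left
      exact ⟨rfl, by omega, by omega⟩
    · rw [if_neg hir]
      right
      exact ⟨rfl, by omega, by omega⟩
  · -- InjOn
    intro x hx y hy he
    simp only [Set.mem_Iic] at hx hy
    have he' : (if x ≤ r then (n + 1, x + 1) else (x, r)) =
        (if y ≤ r then (n + 1, y + 1) else (y, r)) := by
      rw [← key x hx, ← key y hy]
      exact he
    split_ifs at he' <;> rw [Prod.mk.injEq] at he' <;> omega
  · -- SurjOn
    rintro ⟨m, s⟩ hq
    simp only [Set.mem_union, Set.mem_setOf_eq] at hq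
    rcases hq with ⟨hq1, hq2, hq3⟩ | ⟨hq1, hq2, hq3⟩
    · refine ⟨s - 1, ?_, ?_⟩
      · simp only [Set.mem_Iic]; omega
      · show ((insStep [2, 1, 3] π (s - 1)).length, runLen (insStep [2, 1, 3] π (s - 1))) = _
        rw [key (s - 1) (by omega), if_pos (by omega : s - 1 ≤ r)]
        rw [Prod.mk.injEq]
        omega
    · refine ⟨m, ?_, ?_⟩
      · simp only [Set.mem_Iic]; omega
      · show ((insStep [2, 1, 3] π m).length, runLen (insStep [2, 1, 3] π m)) = _
        rw [key m (by omega), if_neg (by omega : ¬ m ≤ r)]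
        rw [Prod.mk.injEq]
        omega
end

section
/- Consider the directed graph whose vertices are all 213-avoiding permutations containing at least one inversion (an occurrence of the pattern 21), with a directed edge from π to τ whenever τ is the output of the 213-insertion step at some position applied to π. Then for any two vertices σ and π of this graph, there is a directed path from σ to π. -/
open List

attribute [local instance] Classical.propDecidable

lemma orderIso_21 (a b : ℕ) : OrderIsoList [a, b] [2, 1] ↔ b ≤ a := by
  constructor
  · intro h
    have := h.2 0 1 (by norm_num) (by simp)
    simp [List.getD] at this
    omega
  · intro h
    refine ⟨rfl, ?_⟩
    intro i j hij hj
    simp at hj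
    interval_cases j <;> interval_cases i <;> simp [List.getD] <;> omega

lemma orderIso_213 (a b c : ℕ) : OrderIsoList [a, b, c] [2, 1, 3] ↔ b ≤ a ∧ a < c ∧ b < c := by
  constructor
  · intro h
    have h01 := h.2 0 1 (by norm_num) (by simp)
    have h02 := h.2 0 2 (by norm_num) (by simp)
    have h12 := h.2 1 2 (by norm_num) (by simp)
    simp [List.getD] at h01 h02 h12
    omega
  · rintro ⟨h1, h2, h3⟩
    refine ⟨rfl, ?_⟩
    intro i j hij hj
    simp at hj
    interval_cases j <;> interval_cases i <;> simp [List.getD] <;> omega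

lemma contains21_iff (l : List ℕ) : ContainsPat l [2, 1] ↔ ∃ a b, b ≤ a ∧ [a, b].Sublist l := by
  constructor
  · rintro ⟨s, hs, hiso⟩
    have hlen : s.length = 2 := by simpa using hiso.1
    obtain ⟨a, b, rfl⟩ := List.length_eq_two.mp hlen
    exact ⟨a, b, (orderIso_21 a b).mp hiso, hs⟩
  · rintro ⟨a, b, hba, hs⟩
    exact ⟨[a, b], hs, (orderIso_21 a b).mpr hba⟩

lemma contains213_iff (l : List ℕ) :
    ContainsPat l [2, 1, 3] ↔ ∃ a b c, b ≤ a ∧ a < c ∧ b < c ∧ [a, b, c].Sublist l := by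
  constructor
  · rintro ⟨s, hs, hiso⟩
    have hlen : s.length = 3 := by simpa using hiso.1
    obtain ⟨a, b, c, rfl⟩ := List.length_eq_three.mp hlen
    obtain ⟨h1, h2, h3⟩ := (orderIso_213 a b c).mp hiso
    exact ⟨a, b, c, h1, h2, h3, hs⟩
  · rintro ⟨a, b, c, h1, h2, h3, hs⟩
    exact ⟨[a, b, c], hs, (orderIso_213 a b c).mpr ⟨h1, h2, h3⟩⟩

lemma AvoidsPat.sublist {l s p : List ℕ} (h : AvoidsPat l p) (hs : s.Sublist l) :
    AvoidsPat s p :=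
  fun ⟨t, ht, hiso⟩ => h ⟨t, ht.trans hs, hiso⟩

lemma avoids213_of_short {l : List ℕ} (h : l.length < 3) : AvoidsPat l [2, 1, 3] := by
  rintro ⟨s, hs, hiso⟩
  have h1 : s.length = 3 := by simpa using hiso.1
  have := hs.length_le
  omega

lemma sublist_pair_of_mem {a b : ℕ} {l : List ℕ} : True := trivial

lemma avoids213_of_sorted {l : List ℕ} (h : l.Pairwise (· < ·)) : AvoidsPat l [2, 1, 3] := by
  rw [AvoidsPat, contains213_iff]
  rintro ⟨a, b, c, hba, hac, hbc, hs⟩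
  have hab : [a, b].Sublist l := ((List.nil_sublist [c]).cons₂ b).cons₂ a |>.trans hs
  have : a < b := List.pairwise_iff_forall_sublist.mp h hab
  omega

lemma avoids213_sorted_append {l : List ℕ} {x : ℕ} (h : l.Pairwise (· < ·))
    (hx : ∀ y ∈ l, x < y) : AvoidsPat (l ++ [x]) [2, 1, 3] := by
  rw [AvoidsPat, contains213_iff]
  rintro ⟨a, b, c, hba, hac, hbc, hs⟩
  rw [List.sublist_append_iff] at hs
  obtain ⟨s₁, s₂, heq, h1, h2⟩ := hs
  rcases List.sublist_singleton.mp h2 with rfl | rfl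
  · rw [List.append_nil] at heq
    subst heq
    have hab : [a, b].Sublist l := ((List.nil_sublist [c]).cons₂ b).cons₂ a |>.trans h1
    have : a < b := List.pairwise_iff_forall_sublist.mp h hab
    omega
  · have hlen : s₁.length = 2 := by
      have := congrArg List.length heq
      simp at this
      omega
    obtain ⟨u, v, rfl⟩ := List.length_eq_two.mp hlen
    simp at heq
    obtain ⟨rfl, rfl, rfl⟩ := heq
    have : b ∈ l := h1.subset (by simp)
    have := hx b this
    omega

lemma avoids213_insertMax {l : List ℕ} {i M : ℕ}
    (hl : AvoidsPat l [2, 1, 3]) (hs : (l.take i).Pairwise (· < ·))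
    (hM : ∀ x ∈ l, x < M) :
    AvoidsPat (l.take i ++ M :: l.drop i) [2, 1, 3] := by
  rw [AvoidsPat, contains213_iff]
  rintro ⟨a, b, c, hba, hac, hbc, hsub⟩
  rw [List.sublist_append_iff] at hsub
  obtain ⟨s₁, s₂, heq, h1, h2⟩ := hsub
  rcases List.sublist_cons_iff.mp h2 with h2' | ⟨r, rfl, hr⟩
  · apply hl
    rw [contains213_iff]
    refine ⟨a, b, c, hba, hac, hbc, ?_⟩
    have hsl : (s₁ ++ s₂).Sublist (l.take i ++ l.drop i) := h1.append h2'
    rwa [List.take_append_drop, ← heq] at hsl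
  · match s₁, heq with
    | [], heq =>
      simp at heq
      obtain ⟨rfl, rfl⟩ := heq
      have : c ∈ l := (hr.trans (List.drop_sublist i l)).subset (by simp)
      have := hM c this
      omega
    | [u], heq =>
      simp at heq
      obtain ⟨rfl, rfl, rfl⟩ := heq
      have : a ∈ l := (h1.trans (List.take_sublist i l)).subset (by simp)
      have := hM a this
      omega
    | [u, v], heq =>
      simp at heq
      obtain ⟨rfl, rfl, rfl, rfl⟩ := heq
      have : a < b := List.pairwise_iff_forall_sublist.mp hs h1
      omega
    | u :: v :: w :: s, heq =>
      have := congrArg List.length heq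
      simp at this

lemma sorted_of_avoids_prefix {A B : List ℕ} {M : ℕ}
    (h : AvoidsPat (A ++ M :: B) [2, 1, 3]) (hA : ∀ x ∈ A, x < M) :
    A.Pairwise (· < ·) := by
  rw [List.pairwise_iff_forall_sublist]
  intro a b hab
  by_contra hba
  push_neg at hba
  apply h
  rw [contains213_iff]
  refine ⟨a, b, M, hba, hA a (hab.subset (by simp)), hA b (hab.subset (by simp)), ?_⟩
  have h2 : ([a, b] ++ [M]).Sublist (A ++ M :: B) :=
    hab.append ((List.nil_sublist B).cons₂ M)
  simpa using h2

noncomputable def cnt (l : List ℕ) (x : ℕ) : ℕ := (l.filter fun y => y ≤ x).length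

lemma standardize_eq (l : List ℕ) : standardize l = l.map (cnt l) := rfl

lemma cnt_perm {l l' : List ℕ} (h : l.Perm l') (x : ℕ) : cnt l x = cnt l' x :=
  (h.filter _).length_eq

lemma cnt_append (l l' : List ℕ) (x : ℕ) : cnt (l ++ l') x = cnt l x + cnt l' x := by
  simp [cnt, List.filter_append]

lemma cnt_cons (a : ℕ) (l : List ℕ) (x : ℕ) :
    cnt (a :: l) x = (if a ≤ x then 1 else 0) + cnt l x := by
  by_cases h : a ≤ x <;> simp [cnt, List.filter_cons, h] <;> omega

lemma cnt_singleton (a x : ℕ) : cnt [a] x = if a ≤ x then 1 else 0 := by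
  by_cases h : a ≤ x <;> simp [cnt, List.filter_cons, h]

lemma cnt_range' (s m x : ℕ) :
    cnt (List.range' s m) x = min (x + 1) (s + m) - min (x + 1) s := by
  induction m with
  | zero => simp [cnt]
  | succ m ih =>
    rw [List.range'_concat, cnt_append, ih, cnt_singleton]
    have : 1 * m = m := one_mul m
    rw [this]
    by_cases h : s + m ≤ x
    · rw [if_pos h]; omega
    · rw [if_neg h]; omega

lemma mem_bounds {l : List ℕ} {n x : ℕ} (h : l.Perm (List.range' 1 n)) (hx : x ∈ l) :
    1 ≤ x ∧ x ≤ n := by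
  have := h.mem_iff.mp hx
  rw [List.mem_range'_1] at this
  omega

lemma standardize_eq_self {l : List ℕ} {n : ℕ} (h : l.Perm (List.range' 1 n)) :
    standardize l = l := by
  rw [standardize_eq]
  have hc : ∀ x ∈ l, cnt l x = x := by
    intro x hx
    rw [cnt_perm h, cnt_range']
    have := mem_bounds h hx
    omega
  rw [List.map_congr_left hc]; exact List.map_id' l

lemma map_range'_eq {f : ℕ → ℕ} {c : ℕ} :
    ∀ {b a : ℕ}, (∀ k, k < b → f (a + k) = c + k) → (List.range' a b).map f = List.range' c b
  | 0, a, _ => by simp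
  | b + 1, a, h => by
    rw [List.range'_succ, List.range'_succ, List.map_cons]
    have h0 : f a = c := by simpa using h 0 (by omega)
    rw [h0]
    congr 1
    apply map_range'_eq (c := c + 1)
    intro k hk
    have e : a + 1 + k = a + (k + 1) := by omega
    rw [e, h (k + 1) (by omega)]
    omega

lemma standardize_pair {a b : ℕ} (h : b < a) : standardize [a, b] = [2, 1] := by
  rw [standardize_eq]
  have h1 : cnt [a, b] a = 2 := by
    rw [cnt_cons, cnt_singleton, if_pos le_rfl, if_pos h.le]
  have h2 : cnt [a, b] b = 1 := by
    rw [cnt_cons, cnt_singleton, if_neg (by omega), if_pos le_rfl]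
  simp [h1, h2]

def Vertex213 (l : List ℕ) : Prop :=
  IsPermList l.length l ∧ AvoidsPat l [2, 1, 3] ∧ ContainsPat l [2, 1]

def Edge213 (l m : List ℕ) : Prop :=
  Vertex213 l ∧ Vertex213 m ∧ ∃ i, i ≤ l.length ∧ insStep [2, 1, 3] l i = m

lemma length_insertMax {l : List ℕ} {i : ℕ} (h : i ≤ l.length) :
    (insertMax l i).length = l.length + 1 := by
  simp [insertMax]
  omega

lemma insertMax_append (A B : List ℕ) {i : ℕ} (h : A.length = i) :
    insertMax (A ++ B) i = A ++ ((A ++ B).length + 1) :: B := by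
  subst h
  rw [insertMax, List.take_left, List.drop_left]

lemma insertMax_perm {l : List ℕ} {n i : ℕ} (h : l.Perm (List.range' 1 n)) :
    (insertMax l i).Perm (List.range' 1 (n + 1)) := by
  have h1 : (insertMax l i).Perm ((l.length + 1) :: l) := by
    rw [insertMax]
    have := List.perm_middle (a := l.length + 1) (l₁ := l.take i) (l₂ := l.drop i)
    rwa [List.take_append_drop] at this
  have hlen : l.length = n := by
    have := h.length_eq
    simpa using this
  have h2 : ((l.length + 1) :: l).Perm ((n + 1) :: List.range' 1 n) := by
    rw [hlen]; exact h.cons _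
  have h3 : (List.range' 1 (n + 1)).Perm ((n + 1) :: List.range' 1 n) := by
    rw [List.range'_concat]
    have e : 1 + 1 * n = n + 1 := by omega
    rw [e]
    exact List.perm_append_singleton _ _
  exact (h1.trans h2).trans h3.symm

lemma sublist_insertMax (l : List ℕ) (i : ℕ) : l.Sublist (insertMax l i) := by
  have : (l.take i ++ l.drop i).Sublist (insertMax l i) :=
    (List.Sublist.refl _).append (List.sublist_cons_self _ _)
  rwa [List.take_append_drop] at this

lemma contains_take_mono {l p : List ℕ} {j k : ℕ} (hjk : j ≤ k)
    (h : ContainsPat (l.take j) p) : ContainsPat (l.take k) p := by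
  obtain ⟨s, hs, hiso⟩ := h
  refine ⟨s, hs.trans ?_, hiso⟩
  have e : l.take j = (l.take k).take j := by
    rw [List.take_take, min_eq_left hjk]
  rw [e]
  exact List.take_sublist _ _

lemma findGreatest_avoid_eq {l : List ℕ} {i j : ℕ}
    (hj : j ≤ (insertMax l i).length)
    (h1 : AvoidsPat ((insertMax l i).take j) [2, 1, 3])
    (h2 : ∀ k, j < k → k ≤ (insertMax l i).length →
      ContainsPat ((insertMax l i).take k) [2, 1, 3]) :
    Nat.findGreatest (fun k => AvoidsPat ((insertMax l i).take k) [2, 1, 3])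
      (insertMax l i).length = j := by
  rw [Nat.findGreatest_eq_iff]
  exact ⟨hj, fun _ => h1, fun k hk hk' hav => hav (h2 k hk hk')⟩

lemma edge_grow {l : List ℕ} {i : ℕ} (hi : i ≤ l.length)
    (hv : Vertex213 l) (hs : (l.take i).Pairwise (· < ·)) :
    Edge213 l (insertMax l i) := by
  obtain ⟨hperm, hav, hinv⟩ := hv
  have hM : ∀ x ∈ l, x < l.length + 1 := fun x hx => by
    have := mem_bounds hperm hx; omega
  have hav' : AvoidsPat (insertMax l i) [2, 1, 3] := avoids213_insertMax hav hs hM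
  have hpm : (insertMax l i).Perm (List.range' 1 (l.length + 1)) := insertMax_perm hperm
  have hlen : (insertMax l i).length = l.length + 1 := length_insertMax hi
  have hinv' : ContainsPat (insertMax l i) [2, 1] := by
    obtain ⟨s, hs', hiso⟩ := hinv
    exact ⟨s, hs'.trans (sublist_insertMax l i), hiso⟩
  have hvert : Vertex213 (insertMax l i) := ⟨by rw [IsPermList, hlen]; exact hpm, hav', hinv'⟩
  refine ⟨⟨hperm, hav, hinv⟩, hvert, i, hi, ?_⟩
  unfold insStep
  rw [findGreatest_avoid_eq le_rfl (by rw [List.take_length]; exact hav')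
    (fun k hk hk' => by omega), List.take_length]
  exact standardize_eq_self hpm

lemma edge_cut {l : List ℕ} {j a b : ℕ} (hj : j ≤ l.length)
    (hv : Vertex213 l) (hba : b ≤ a) (hab : [a, b].Sublist (l.take j))
    (hv' : Vertex213 (standardize (l.take j))) :
    Edge213 l (standardize (l.take j)) := by
  obtain ⟨hperm, hav, hinv⟩ := hv
  have hlen : (insertMax l j).length = l.length + 1 := length_insertMax hj
  have htake : (insertMax l j).take j = l.take j := by
    apply List.take_left'
    rw [List.length_take]
    omega
  have htake1 : (insertMax l j).take (j + 1) = l.take j ++ [l.length + 1] := by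
    rw [insertMax]
    have e : j + 1 = (l.take j).length + 1 := by rw [List.length_take]; omega
    rw [e, List.take_append]
    simp
  have haM : a < l.length + 1 := by
    have : a ∈ l := (hab.trans (List.take_sublist _ _)).subset (by simp)
    have := mem_bounds hperm this; omega
  have hbM : b < l.length + 1 := by
    have : b ∈ l := (hab.trans (List.take_sublist _ _)).subset (by simp)
    have := mem_bounds hperm this; omega
  have hcont : ContainsPat ((insertMax l j).take (j + 1)) [2, 1, 3] := by
    rw [htake1, contains213_iff]
    refine ⟨a, b, l.length + 1, hba, haM, hbM, ?_⟩
    have h2 := hab.append (List.Sublist.refl [l.length + 1])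
    simpa using h2
  refine ⟨⟨hperm, hav, hinv⟩, hv', j, hj, ?_⟩
  unfold insStep
  rw [findGreatest_avoid_eq (l := l) (i := j) (j := j) (by omega)
    (by rw [htake]; exact hav.sublist (List.take_sublist _ _))
    (fun k hk hk' => contains_take_mono (by omega : j + 1 ≤ k) hcont), htake]

def Dl (m : ℕ) : List ℕ := List.range' 2 m ++ [1]

lemma range'_split_s12 (s m n : ℕ) :
    List.range' s (m + n) = List.range' s m ++ List.range' (s + m) n := by
  have h := List.range'_append (s := s) (m := m) (n := n) (step := 1)
  rw [one_mul] at h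
  rw [← h]

lemma Dl_length (m : ℕ) : (Dl m).length = m + 1 := by simp [Dl]

lemma perm_Dl (m : ℕ) : (Dl m).Perm (List.range' 1 (m + 1)) := by
  rw [Dl]
  have e : List.range' 1 (m + 1) = 1 :: List.range' 2 m := List.range'_succ (s := 1) (n := m) (step := 1)
  rw [e]
  exact List.perm_append_singleton 1 (List.range' 2 m)

lemma sorted_range' (s m : ℕ) : (List.range' s m).Pairwise (· < ·) :=
  List.pairwise_lt_range' (s := s) (n := m)

lemma vertex_Dl {m : ℕ} (hm : 1 ≤ m) : Vertex213 (Dl m) := by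
  refine ⟨?_, ?_, ?_⟩
  · rw [IsPermList, Dl_length]
    exact perm_Dl m
  · exact avoids213_sorted_append (sorted_range' 2 m)
      (fun y hy => by have := List.mem_range'_1.mp hy; omega)
  · rw [contains21_iff]
    refine ⟨2, 1, by omega, ?_⟩
    rw [Dl]
    have h2 : [2].Sublist (List.range' 2 m) := by
      obtain ⟨m', rfl⟩ : ∃ m', m = m' + 1 := ⟨m - 1, by omega⟩
      rw [List.range'_succ]
      exact (List.nil_sublist _).cons₂ 2
    exact h2.append (List.Sublist.refl [1])

lemma edge_Dl (m : ℕ) (hm : 1 ≤ m) : Edge213 (Dl m) (Dl (m + 1)) := by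
  have hlen : (List.range' 2 m).length = m := by simp
  have htake : (Dl m).take m = List.range' 2 m := List.take_left' hlen
  have h := edge_grow (l := Dl m) (i := m) (by rw [Dl_length]; omega) (vertex_Dl hm)
    (by rw [htake]; exact sorted_range' 2 m)
  have he : insertMax (Dl m) m = Dl (m + 1) := by
    rw [Dl, insertMax_append _ _ hlen]
    have e1 : (List.range' 2 m ++ [1]).length + 1 = m + 2 := by simp
    rw [e1]
    rw [show Dl (m + 1) = List.range' 2 (m + 1) ++ [1] from rfl, List.range'_concat]
    have e : 2 + 1 * m = m + 2 := by omega
    rw [e, List.append_assoc]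
    rfl
  rwa [he] at h

lemma path_Dl (m : ℕ) (hm : 1 ≤ m) : Relation.ReflTransGen Edge213 (Dl 1) (Dl m) := by
  induction m, hm using Nat.le_induction with
  | base => exact Relation.ReflTransGen.refl
  | succ m hm ih => exact ih.tail (edge_Dl m hm)

def Bl (i j : ℕ) : List ℕ := List.range' 1 i ++ (i + j + 1) :: List.range' (i + 1) j

lemma vertex_Bl (i : ℕ) {j : ℕ} (hj : 1 ≤ j) : Vertex213 (Bl i j) := by
  have hsplit : List.range' 1 (i + j) = List.range' 1 i ++ List.range' (i + 1) j := by
    rw [range'_split_s12 1 i j, Nat.add_comm 1 i]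
  have htake : (List.range' 1 (i + j)).take i = List.range' 1 i := by
    rw [hsplit]; exact List.take_left' (by simp)
  have hdrop : (List.range' 1 (i + j)).drop i = List.range' (i + 1) j := by
    rw [hsplit]; exact List.drop_left' (by simp)
  refine ⟨?_, ?_, ?_⟩
  · rw [IsPermList]
    have hlen : (Bl i j).length = i + j + 1 := by simp [Bl]; omega
    rw [hlen]
    have h1 : (Bl i j).Perm ((i + j + 1) :: List.range' 1 (i + j)) := by
      rw [Bl, hsplit]
      exact List.perm_middle
    have h2 : (List.range' 1 (i + j + 1)).Perm ((i + j + 1) :: List.range' 1 (i + j)) := by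
      rw [List.range'_concat]
      have e : 1 + 1 * (i + j) = i + j + 1 := by omega
      rw [e]
      exact List.perm_append_singleton _ _
    exact h1.trans h2.symm
  · have h := avoids213_insertMax (l := List.range' 1 (i + j)) (i := i) (M := i + j + 1)
      (avoids213_of_sorted (sorted_range' _ _)) (by rw [htake]; exact sorted_range' _ _)
      (fun x hx => by have := List.mem_range'_1.mp hx; omega)
    rwa [htake, hdrop] at h
  · rw [contains21_iff]
    have h1 : [i + 1].Sublist (List.range' (i + 1) j) := by
      obtain ⟨j', rfl⟩ : ∃ j', j = j' + 1 := ⟨j - 1, by omega⟩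
      rw [List.range'_succ]
      exact (List.nil_sublist _).cons₂ _
    have h3 := (List.nil_sublist (List.range' 1 i)).append (h1.cons₂ (i + j + 1))
    exact ⟨i + j + 1, i + 1, by omega, by simpa [Bl] using h3⟩

def Ll (i j : ℕ) : List ℕ :=
  List.range' 2 i ++ (i + j + 2) :: (List.range' (i + 2) j ++ [1])

lemma Dl_split (i j : ℕ) :
    Dl (i + j) = List.range' 2 i ++ (List.range' (i + 2) j ++ [1]) := by
  rw [Dl, range'_split_s12 2 i j, Nat.add_comm 2 i, List.append_assoc]

lemma edge_DlLl (i : ℕ) {j : ℕ} (hj : 1 ≤ j) : Edge213 (Dl (i + j)) (Ll i j) := by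
  have htake : (Dl (i + j)).take i = List.range' 2 i := by
    rw [Dl_split]; exact List.take_left' (by simp)
  have h := edge_grow (l := Dl (i + j)) (i := i) (by rw [Dl_length]; omega)
    (vertex_Dl (by omega))
    (by rw [htake]; exact sorted_range' 2 i)
  have he : insertMax (Dl (i + j)) i = Ll i j := by
    rw [Dl_split, insertMax_append _ _ (by simp)]
    have e1 : (List.range' 2 i ++ (List.range' (i + 2) j ++ [1])).length + 1 = i + j + 2 := by
      simp; omega
    rw [e1, Ll]
  rwa [he] at h

lemma Tl_perm (i j : ℕ) :
    (List.range' 2 i ++ (i + j + 2) :: List.range' (i + 2) j).Perm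
      ((i + j + 2) :: List.range' 2 (i + j)) := by
  have h2 : List.range' 2 i ++ List.range' (2 + i) j = List.range' 2 (i + j) :=
    (range'_split_s12 2 i j).symm
  rw [Nat.add_comm i 2, ← h2]
  exact List.perm_middle

lemma standardize_Tl (i j : ℕ) :
    standardize (List.range' 2 i ++ (i + j + 2) :: List.range' (i + 2) j) = Bl i j := by
  set T := List.range' 2 i ++ (i + j + 2) :: List.range' (i + 2) j with hT
  have hcnt : ∀ x, cnt T x =
      (if i + j + 2 ≤ x then 1 else 0) + (min (x + 1) (2 + (i + j)) - min (x + 1) 2) := by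
    intro x
    rw [cnt_perm (Tl_perm i j), cnt_cons, cnt_range']
  rw [standardize_eq, hT, List.map_append, List.map_cons]
  have hm1 : (List.range' 2 i).map (cnt T) = List.range' 1 i := by
    apply map_range'_eq
    intro k hk
    rw [hcnt, if_neg (by omega)]
    omega
  have hm2 : (List.range' (i + 2) j).map (cnt T) = List.range' (i + 1) j := by
    apply map_range'_eq
    intro k hk
    rw [hcnt, if_neg (by omega)]
    omega
  have hm3 : cnt T (i + j + 2) = i + j + 1 := by
    rw [hcnt, if_pos le_rfl]
    omega
  rw [hm1, hm2, hm3, Bl]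

lemma edge_LlBl (i : ℕ) {j : ℕ} (hj : 1 ≤ j) : Edge213 (Ll i j) (Bl i j) := by
  have hLl : Ll i j = (List.range' 2 i ++ (i + j + 2) :: List.range' (i + 2) j) ++ [1] := by
    rw [Ll, List.append_assoc]
    rfl
  have hlenT : (List.range' 2 i ++ (i + j + 2) :: List.range' (i + 2) j).length = i + j + 1 := by
    simp; omega
  have htake : (Ll i j).take (i + j + 1) =
      List.range' 2 i ++ (i + j + 2) :: List.range' (i + 2) j := by
    rw [hLl]; exact List.take_left' hlenT
  have hvL : Vertex213 (Ll i j) := (edge_DlLl i hj).2.1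
  have hab : [i + j + 2, i + 2].Sublist ((Ll i j).take (i + j + 1)) := by
    rw [htake]
    have h1 : [i + 2].Sublist (List.range' (i + 2) j) := by
      obtain ⟨j', rfl⟩ : ∃ j', j = j' + 1 := ⟨j - 1, by omega⟩
      rw [List.range'_succ]
      exact (List.nil_sublist _).cons₂ _
    have h3 := (List.nil_sublist (List.range' 2 i)).append (h1.cons₂ (i + j + 2))
    simpa using h3
  have hstd : standardize ((Ll i j).take (i + j + 1)) = Bl i j := by
    rw [htake, standardize_Tl]
  have hlenL : (Ll i j).length = i + j + 2 := by simp [Ll]; omega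
  have h := edge_cut (l := Ll i j) (j := i + j + 1) (a := i + j + 2) (b := i + 2)
    (by omega) hvL (by omega) hab (by rw [hstd]; exact vertex_Bl i hj)
  rwa [hstd] at h

lemma reach_aux : ∀ n : ℕ, ∀ π : List ℕ, π.length = n → Vertex213 π →
    Relation.ReflTransGen Edge213 (Dl 1) π := by
  intro n
  induction n using Nat.strong_induction_on with
  | _ n ih =>
    intro π hlen hπ
    obtain ⟨hperm, hav, hinv⟩ := hπ
    rw [IsPermList, hlen] at hperm
    have hn2 : 2 ≤ n := by
      obtain ⟨a, b, hba, hab⟩ := (contains21_iff π).mp hinv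
      have := hab.length_le
      simp at this
      omega
    have hmem : n ∈ π := hperm.mem_iff.mpr (List.mem_range'_1.mpr ⟨by omega, by omega⟩)
    obtain ⟨A, B, hAB⟩ := List.append_of_mem hmem
    have hABlen : A.length + B.length + 1 = n := by
      have := congrArg List.length hAB
      simp at this
      omega
    have hnodup : π.Nodup := hperm.nodup_iff.mpr (List.nodup_range' (s := 1) (n := n))
    have hnotmem : n ∉ A ++ B := by
      have h1 : (n :: (A ++ B)).Nodup := List.nodup_middle.mp (hAB ▸ hnodup)
      exact (List.nodup_cons.mp h1).1
    have hredsub : (A ++ B).Sublist π := by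
      rw [hAB]
      exact (List.Sublist.refl A).append (List.sublist_cons_self n B)
    have hbound : ∀ x ∈ A ++ B, x < n := by
      intro x hx
      have h1 := mem_bounds hperm (hredsub.subset hx)
      have h2 : x ≠ n := fun h => hnotmem (h ▸ hx)
      omega
    have hredperm : (A ++ B).Perm (List.range' 1 (n - 1)) := by
      have h1 : π.Perm (n :: (A ++ B)) := by rw [hAB]; exact List.perm_middle
      have h2 : (n :: (A ++ B)).Perm (List.range' 1 n) := h1.symm.trans hperm
      have h3 := List.range'_concat (step := 1) (s := 1) (n := n - 1)
      rw [show n - 1 + 1 = n from by omega, show 1 + 1 * (n - 1) = n from by omega] at h3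
      rw [h3] at h2
      exact (h2.trans (List.perm_append_singleton _ _)).cons_inv
    have hAsorted : A.Pairwise (· < ·) := by
      apply sorted_of_avoids_prefix (B := B) (M := n)
      · rwa [← hAB]
      · intro x hx
        exact hbound x (List.mem_append_left B hx)
    by_cases hc : ContainsPat (A ++ B) [2, 1]
    · have hredlen : (A ++ B).length = n - 1 := by simp; omega
      have hredvert : Vertex213 (A ++ B) :=
        ⟨by rw [IsPermList, hredlen]; exact hredperm, hav.sublist hredsub, hc⟩
      have hpath := ih (n - 1) (by omega) (A ++ B) hredlen hredvert
      have hedge : Edge213 (A ++ B) π := by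
        have h := edge_grow (l := A ++ B) (i := A.length) (by simp) hredvert
          (by rw [List.take_left]; exact hAsorted)
        have he : insertMax (A ++ B) A.length = π := by
          rw [insertMax_append A B rfl, show (A ++ B).length + 1 = n from by simp; omega]
          exact hAB.symm
        rwa [he] at h
      exact hpath.tail hedge
    · have hsorted : (A ++ B).Pairwise (· < ·) := by
        rw [List.pairwise_iff_forall_sublist]
        intro a b hab
        by_contra hba
        push_neg at hba
        exact hc ((contains21_iff _).mpr ⟨a, b, hba, hab⟩)
      have hred_eq : A ++ B = List.range' 1 (n - 1) :=
        List.Perm.eq_of_sortedLE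
          (hsorted.imp le_of_lt).sortedLE ((sorted_range' 1 (n - 1)).imp le_of_lt).sortedLE hredperm
      have hsplit : List.range' 1 (n - 1) =
          List.range' 1 A.length ++ List.range' (A.length + 1) (n - 1 - A.length) := by
        have h := range'_split_s12 1 A.length (n - 1 - A.length)
        rw [show A.length + (n - 1 - A.length) = n - 1 from by omega, Nat.add_comm 1 A.length] at h
        exact h
      have hA := List.append_inj (hred_eq.trans hsplit) (by simp)
      have hBne : n - 1 - A.length ≠ 0 := by
        intro h0
        have hBnil : B = [] := by rw [hA.2, h0]; rfl
        have hπeq : π = List.range' 1 n := by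
          have h := List.range'_concat (step := 1) (s := 1) (n := n - 1)
          rw [show n - 1 + 1 = n from by omega, show 1 + 1 * (n - 1) = n from by omega] at h
          rw [hAB, hBnil, hA.1, show A.length = n - 1 from by omega, h]
        obtain ⟨a, b, hba, hab⟩ := (contains21_iff π).mp hinv
        have := List.pairwise_iff_forall_sublist.mp (List.pairwise_lt_range' (s := 1) (n := n)) (hπeq ▸ hab)
        omega
      obtain ⟨hA1, hA2⟩ := hA
      set k := A.length with hk
      have hπBl : π = Bl k (n - 1 - k) := by
        rw [hAB, Bl, show k + (n - 1 - k) + 1 = n from by omega, ← hA1, ← hA2]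
      rw [hπBl]
      exact ((path_Dl (k + (n - 1 - k)) (by omega)).tail
        (edge_DlLl k (by omega))).tail (edge_LlBl k (by omega))

lemma vertex_21 : Vertex213 [2, 1] := by
  refine ⟨?_, avoids213_of_short (by simp),
    (contains21_iff _).mpr ⟨2, 1, by omega, List.Sublist.refl _⟩⟩
  rw [IsPermList]
  exact List.Perm.swap 1 2 []

lemma path_to_21 (σ : List ℕ) (hσ : Vertex213 σ) :
    Relation.ReflTransGen Edge213 σ (Dl 1) := by
  obtain ⟨hperm, hav, hinv⟩ := hσ
  have hlen2 : 2 ≤ σ.length := by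
    obtain ⟨a, b, hba, hab⟩ := (contains21_iff σ).mp hinv
    have := hab.length_le
    simp at this
    omega
  have h1 := edge_grow (l := σ) (i := 0) (by omega) ⟨hperm, hav, hinv⟩ (by simp)
  have he1 : insertMax σ 0 = (σ.length + 1) :: σ := by simp [insertMax]
  rw [he1] at h1
  obtain ⟨x, t, rfl⟩ : ∃ x t, σ = x :: t := by
    cases σ with
    | nil => simp at hlen2
    | cons x t => exact ⟨x, t, rfl⟩
  have hvl : Vertex213 (((x :: t).length + 1) :: x :: t) := h1.2.1
  have hxM : x < (x :: t).length + 1 := by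
    have := mem_bounds hperm (by simp : x ∈ x :: t)
    omega
  have htake2 : ((((x :: t).length + 1) :: x :: t).take 2) = [(x :: t).length + 1, x] := rfl
  have hstd : standardize ((((x :: t).length + 1) :: x :: t).take 2) = [2, 1] := by
    rw [htake2]
    exact standardize_pair hxM
  have h2 := edge_cut (l := ((x :: t).length + 1) :: x :: t) (j := 2)
    (a := (x :: t).length + 1) (b := x) (by simp) hvl hxM.le
    (by rw [htake2]) (by rw [hstd]; exact vertex_21)
  rw [hstd] at h2
  have hD : Dl 1 = [2, 1] := rfl
  rw [hD]
  exact (Relation.ReflTransGen.single h1).tail h2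

/-- Between any two vertices of the 213-avoider graph there is a directed path. -/
theorem edge213_strongly_connected (σ π : List ℕ)
    (hσ : Vertex213 σ) (hπ : Vertex213 π) :
    Relation.ReflTransGen Edge213 σ π :=
  (path_to_21 σ hσ).trans (reach_aux π.length π rfl hπ)
end

section
/- Let T be a finite binary tree. Then the function g is injective on the leaves of T: if u and v are distinct leaves of T, then g(u) ≠ g(v). -/
/-- The subtree of a binary tree reached by following a path from the root, where `false`
means "step to the left child" and `true` means "step to the right child".  Stepping from
the empty tree yields the empty tree. -/
def subtreeAt : BinaryTree Unit → List Bool → BinaryTree Unit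
  | t, [] => t
  | BinaryTree.nil, _ :: _ => BinaryTree.nil
  | BinaryTree.node _ l r, b :: p => subtreeAt (if b then r else l) p

/-- A path `p` identifies a node of the tree `t` if the subtree reached is nonempty. -/
def IsNodeOf (t : BinaryTree Unit) (p : List Bool) : Prop := subtreeAt t p ≠ BinaryTree.nil

/-- A path `p` identifies a leaf of `t`: a node with no children. -/
def IsLeafOf (t : BinaryTree Unit) (p : List Bool) : Prop :=
  ∃ a, subtreeAt t p = BinaryTree.node a BinaryTree.nil BinaryTree.nil

/-- The value `g(v)` of the node reached by the path `p`: along the path from the root,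
each time the path steps from a node `w` to its left child, add `1` plus the number of
nodes in the right subtree of `w`.  (So `g` of the root is `0`.) -/
def g : BinaryTree Unit → List Bool → ℕ
  | _, [] => 0
  | BinaryTree.nil, _ :: _ => 0
  | BinaryTree.node _ l r, b :: p => if b then g r p else r.numNodes + 1 + g l p

lemma g_add_numNodes_le : ∀ (t : BinaryTree Unit) (p : List Bool), IsNodeOf t p →
    g t p + (subtreeAt t p).numNodes ≤ t.numNodes
  | t, [], _ => by simp [g, subtreeAt]
  | BinaryTree.nil, _ :: _, h => absurd rfl h
  | BinaryTree.node a l r, b :: p, h => by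
    have h' : IsNodeOf (if b then r else l) p := h
    have := g_add_numNodes_le (if b then r else l) p h'
    cases b with
    | true =>
      simp only [g, subtreeAt, if_true, BinaryTree.numNodes] at this ⊢
      omega
    | false =>
      simp only [g, subtreeAt, Bool.false_eq_true, if_false, BinaryTree.numNodes] at this ⊢
      omega

lemma pos_numNodes_of_leaf {t : BinaryTree Unit} {p : List Bool} (h : IsLeafOf t p) :
    1 ≤ (subtreeAt t p).numNodes := by
  obtain ⟨a, ha⟩ := h
  simp [ha, BinaryTree.numNodes]

/-- The function `g` is injective on the leaves of a finite binary tree. -/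
theorem g_injective_on_leaves (t : BinaryTree Unit) (u v : List Bool)
    (hu : IsLeafOf t u) (hv : IsLeafOf t v) (huv : u ≠ v) :
    g t u ≠ g t v := by
  induction t generalizing u v with
  | nil =>
    obtain ⟨a, ha⟩ := hu
    cases u <;> simp [subtreeAt] at ha
  | node a l r ihl ihr =>
    match u, v with
    | [], [] => exact absurd rfl huv
    | [], c :: q =>
      obtain ⟨x, hx⟩ := hu
      simp only [subtreeAt] at hx
      obtain ⟨rfl, rfl⟩ : l = BinaryTree.nil ∧ r = BinaryTree.nil := by
        injection hx with _ h1 h2; exact ⟨h1, h2⟩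
      obtain ⟨y, hy⟩ := hv
      cases c <;> cases q <;> simp [subtreeAt] at hy
    | b :: p, [] =>
      obtain ⟨x, hx⟩ := hv
      simp only [subtreeAt] at hx
      obtain ⟨rfl, rfl⟩ : l = BinaryTree.nil ∧ r = BinaryTree.nil := by
        injection hx with _ h1 h2; exact ⟨h1, h2⟩
      obtain ⟨y, hy⟩ := hu
      cases b <;> cases p <;> simp [subtreeAt] at hy
    | b :: p, c :: q =>
      have hu' : IsLeafOf (if b then r else l) p := hu
      have hv' : IsLeafOf (if c then r else l) q := hv
      cases b <;> cases c <;>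
        simp only [Bool.false_eq_true, if_true, if_false] at hu' hv' <;>
        simp only [g, Bool.false_eq_true, if_true, if_false]
      · exact fun h => ihl p q hu' hv' (by simpa using huv) (by omega)
      · -- u left, v right : g = r.numNodes + 1 + g l p vs g r q
        have hnode : IsNodeOf r q := by
          obtain ⟨y, hy⟩ := hv'; rw [IsNodeOf, hy]; simp
        have h1 := g_add_numNodes_le r q hnode
        have h2 := pos_numNodes_of_leaf hv'
        omega
      · have hnode : IsNodeOf r p := by
          obtain ⟨y, hy⟩ := hu'; rw [IsNodeOf, hy]; simp
        have h1 := g_add_numNodes_le r p hnode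
        have h2 := pos_numNodes_of_leaf hu'
        omega
      · exact ihr p q hu' hv' (by simpa using huv)
end
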